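/- Let G be a graph, let uv be an edge of G, and let G' be the graph obtained from G by subdividing uv once, i.e. deleting the edge uv and adding a new vertex w adjacent exactly to u and v. Then mimw(G) ≤ mimw(G') ≤ mimw(G) + 1. -/

import Mathlib

open SimpleGraph

/-- `M` is an induced matching in the bipartite graph `G[X,Y]`: every pair in `M` is an
edge of `G` with first endpoint in `X` and second endpoint in `Y`, the pairs are pairwise
vertex-disjoint, and no edge of `G` between `X` and `Y` joins vertices incident to
distinct pairs of `M`. -/
def IsInducedCutMatching {V : Type*} (G : SimpleGraph V) (X Y : Set V)
    (M : Finset (V × V)) : Prop :=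
  (∀ p ∈ M, p.1 ∈ X ∧ p.2 ∈ Y ∧ G.Adj p.1 p.2) ∧
  ∀ p ∈ M, ∀ q ∈ M, p ≠ q →
    p.1 ≠ q.1 ∧ p.2 ≠ q.2 ∧ p.1 ≠ q.2 ∧ p.2 ≠ q.1 ∧
    ¬ G.Adj p.1 q.2 ∧ ¬ G.Adj q.1 p.2

/-- `cutmim G X Y` is the maximum size of an induced matching in `G[X,Y]`. -/
noncomputable def cutmim {V : Type*} (G : SimpleGraph V) (X Y : Set V) : ℕ :=
  sSup {n : ℕ | ∃ M : Finset (V × V), IsInducedCutMatching G X Y M ∧ M.card = n}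

/-- A branch decomposition of a graph `G`: a finite tree `T` of maximum degree at most 3
together with a bijection `δ` from the vertices of `G` to the leaves of `T`. -/
structure BranchDecomp {V : Type*} (G : SimpleGraph V) where
  L : Type
  T : SimpleGraph L
  finite : Finite L
  connected : T.Connected
  acyclic : T.IsAcyclic
  subcubic : ∀ x : L, (T.neighborSet x).ncard ≤ 3
  δ : V → L
  δ_inj : Function.Injective δ
  δ_leaf : ∀ v : V, (T.neighborSet (δ v)).ncard = 1
  δ_surj : ∀ x : L, (T.neighborSet x).ncard = 1 → ∃ v : V, δ v = x

/-- The side of the cut of `V(G)` induced by the tree edge `ab`: the set of vertices of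
`G` mapped by `δ` into the component of `T - ab` containing `a`. -/
def BranchDecomp.side {V : Type*} {G : SimpleGraph V} (B : BranchDecomp G)
    (a b : B.L) : Set V :=
  {v : V | (B.T.deleteEdges {s(a, b)}).Reachable (B.δ v) a}

/-- The mim-width of a branch decomposition: the maximum over tree edges `ab` of
`cutmim G (A_e, V(G) \ A_e)`. -/
noncomputable def BranchDecomp.width {V : Type*} {G : SimpleGraph V}
    (B : BranchDecomp G) : ℕ :=
  sSup {n : ℕ | ∃ a b : B.L, B.T.Adj a b ∧ n = cutmim G (B.side a b) (B.side a b)ᶜ}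

/-- The mim-width of a graph: the minimum width over all branch decompositions
(by convention `0` if no branch decomposition exists, e.g. for graphs with fewer
than two vertices). -/
noncomputable def mimw {V : Type*} (G : SimpleGraph V) : ℕ :=
  sInf {n : ℕ | ∃ B : BranchDecomp G, B.width = n}

/-- `G` is `H`-free: no induced subgraph of `G` is isomorphic to `H`. -/
def HFree {V W : Type*} (G : SimpleGraph V) (H : SimpleGraph W) : Prop :=
  ¬ ∃ S : Set V, Nonempty ((G.induce S) ≃g H)

/-- The disjoint union of two graphs. -/
def sumGraph {α β : Type*} (G : SimpleGraph α) (H : SimpleGraph β) :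
    SimpleGraph (α ⊕ β) :=
  SimpleGraph.fromRel (fun a b =>
    (∃ x y, a = Sum.inl x ∧ b = Sum.inl y ∧ G.Adj x y) ∨
    (∃ x y, a = Sum.inr x ∧ b = Sum.inr y ∧ H.Adj x y))

/-- `tP₂`: the disjoint union of `t` single edges. -/
def tP2graph (t : ℕ) : SimpleGraph (Fin t × Fin 2) :=
  SimpleGraph.fromRel (fun a b => a.1 = b.1)

/-- `sP₁ + P₂`: `s` isolated vertices together with a single edge. -/
def sP1P2graph (s : ℕ) : SimpleGraph (Fin s ⊕ Fin 2) :=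
  SimpleGraph.fromRel (fun a b => ∃ i j : Fin 2, a = Sum.inr i ∧ b = Sum.inr j)

/-- `K_r ⊟ K_r`: two disjoint copies of `K_r` joined by a perfect matching. -/
def KboxK (r : ℕ) : SimpleGraph (Fin r ⊕ Fin r) :=
  SimpleGraph.fromRel (fun a b =>
    (∃ i j, a = Sum.inl i ∧ b = Sum.inl j) ∨
    (∃ i j, a = Sum.inr i ∧ b = Sum.inr j) ∨
    (∃ i, a = Sum.inl i ∧ b = Sum.inr i))

/-- `K_r ⊟ rP₁`: a clique `a_1, …, a_r`, an independent set `b_1, …, b_r`, and the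
matching edges `a_i b_i`. -/
def KboxI (r : ℕ) : SimpleGraph (Fin r ⊕ Fin r) :=
  SimpleGraph.fromRel (fun a b =>
    (∃ i j, a = Sum.inl i ∧ b = Sum.inl j) ∨
    (∃ i, a = Sum.inl i ∧ b = Sum.inr i))

/-- `K_r ⊟ P₁`: `K_r` plus a pendant vertex attached to exactly one vertex of `K_r`. -/
def KboxP1 (r : ℕ) : SimpleGraph (Fin r ⊕ Unit) :=
  SimpleGraph.fromRel (fun a b =>
    (∃ i j : Fin r, a = Sum.inl i ∧ b = Sum.inl j) ∨
    (∃ i : Fin r, i.val = 0 ∧ a = Sum.inl i ∧ b = Sum.inr ()))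

/-- The claw `K_{1,3}`: vertex `0` adjacent to the three leaves `1`, `2`, `3`. -/
def clawGraph : SimpleGraph (Fin 4) :=
  SimpleGraph.fromRel (fun a _ => a = 0)

/-- The diamond: `K_4` minus the edge `{2,3}`. -/
def diamondGraph : SimpleGraph (Fin 4) :=
  SimpleGraph.fromRel (fun a b => ¬(a = 2 ∧ b = 3) ∧ ¬(a = 3 ∧ b = 2))

/-- The bowtie `⋈`: two triangles `{0,1,2}` and `{0,3,4}` sharing the vertex `0`. -/
def bowtieGraph : SimpleGraph (Fin 5) :=
  SimpleGraph.fromRel (fun a b => a = 0 ∨ (a = 1 ∧ b = 2) ∨ (a = 3 ∧ b = 4))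

/-- `P₁ + 2P₂`: the isolated vertex `0` and the two disjoint edges `12` and `34`. -/
def P1plus2P2graph : SimpleGraph (Fin 5) :=
  SimpleGraph.fromRel (fun a b => (a = 1 ∧ b = 2) ∨ (a = 3 ∧ b = 4))

/-- The subdivided claw `S_{1,1,5}`: centre `0` with leaves `1`, `2` at distance one and
the path `0-3-4-5-6-7`. -/
def S115graph : SimpleGraph (Fin 8) :=
  SimpleGraph.fromRel (fun a b =>
    (a = 0 ∧ b = 1) ∨ (a = 0 ∧ b = 2) ∨ (a = 0 ∧ b = 3) ∨
    (a = 3 ∧ b = 4) ∨ (a = 4 ∧ b = 5) ∨ (a = 5 ∧ b = 6) ∨ (a = 6 ∧ b = 7))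

/-- The Ramsey number `R(a,b)`: the least `N` such that every graph on at least `N`
vertices contains a clique of size `a` or an independent set of size `b`. -/
noncomputable def ramsey (a b : ℕ) : ℕ :=
  sInf {N : ℕ | ∀ M : ℕ, N ≤ M → ∀ G : SimpleGraph (Fin M),
    (∃ s : Finset (Fin M), G.IsNClique a s) ∨ (∃ s : Finset (Fin M), Gᶜ.IsNClique b s)}

/-- The `h × 2r` grid with the vertical edges prescribed by the wall construction:
the vertical edge between rows `i` and `i+1` of column `j` (all `0`-indexed) is kept
exactly when `i ≡ j (mod 2)`. -/
def wallPre (h r : ℕ) : SimpleGraph (Fin h × Fin (2 * r)) :=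
  SimpleGraph.fromRel (fun a b =>
    (a.1 = b.1 ∧ (a.2 : ℕ) + 1 = (b.2 : ℕ)) ∨
    (a.2 = b.2 ∧ (a.1 : ℕ) + 1 = (b.1 : ℕ) ∧ (a.1 : ℕ) % 2 = (a.2 : ℕ) % 2))

/-- The elementary `(h × r)`-wall: delete from `wallPre h r` all vertices of degree 1. -/
def elementaryWall (h r : ℕ) :
    SimpleGraph {v : Fin h × Fin (2 * r) // ((wallPre h r).neighborSet v).ncard ≠ 1} :=
  (wallPre h r).induce {v | ((wallPre h r).neighborSet v).ncard ≠ 1}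

/-- The graph obtained from `W` by simultaneously performing a clique implant on every
vertex of degree `3`: a degree-3 vertex `v` is replaced by the triangle of vertices
`(v, some u)` for `u` a neighbour of `v`, and `(v, some u)` inherits the edge of `v`
towards `u`; vertices of degree `≠ 3` are kept as `(v, none)`. -/
def cliqueImplantAll {V : Type*} (W : SimpleGraph V) :
    SimpleGraph {p : V × Option V //
      (p.2 = none ∧ (W.neighborSet p.1).ncard ≠ 3) ∨
      (∃ u, p.2 = some u ∧ (W.neighborSet p.1).ncard = 3 ∧ W.Adj p.1 u)} :=
  SimpleGraph.fromRel (fun a b =>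
    (a.1.1 = b.1.1 ∧ a.1.2 ≠ b.1.2) ∨
    (W.Adj a.1.1 b.1.1 ∧ (a.1.2 = none ∨ a.1.2 = some b.1.1) ∧
      (b.1.2 = none ∨ b.1.2 = some a.1.1)))

/-- A net-wall: the graph obtained from the elementary `(n × n)`-wall by performing a
clique implant on every vertex of degree `3`. -/
def netWall (n : ℕ) := cliqueImplantAll (elementaryWall n n)

/-- The chordal bipartite graph `G'` of Brault-Baron, Capelli and Mengel, built from a
graph `G`: vertices `x_v` (`Sum.inl v`), `y_v` (`Sum.inr (Sum.inl v)`), and for every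
ordered adjacent pair `p = (u,v)` two vertices `q_p = (p,0)` and `t_p = (p,1)`;
`X` is complete to `Y`, and for each adjacent pair `(u,v)` there is a path
`x_u - q_{(u,v)} - t_{(u,v)} - y_v`. -/
def BCMgraph {V : Type*} (G : SimpleGraph V) :
    SimpleGraph (V ⊕ V ⊕ ({p : V × V // G.Adj p.1 p.2} × Fin 2)) :=
  SimpleGraph.fromRel (fun a b =>
    (∃ u w : V, a = Sum.inl u ∧ b = Sum.inr (Sum.inl w)) ∨
    (∃ p : {p : V × V // G.Adj p.1 p.2},
      a = Sum.inl p.1.1 ∧ b = Sum.inr (Sum.inr (p, 0))) ∨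
    (∃ p : {p : V × V // G.Adj p.1 p.2},
      a = Sum.inr (Sum.inr (p, 0)) ∧ b = Sum.inr (Sum.inr (p, 1))) ∨
    (∃ p : {p : V × V // G.Adj p.1 p.2},
      a = Sum.inr (Sum.inr (p, 1)) ∧ b = Sum.inr (Sum.inl p.1.2)))

open SimpleGraph

section Infra

variable {α : Type*} {β : Type*}

/-- Reachability transfers along "pseudo-homomorphisms". -/
lemma reach_of_adjImp {H : SimpleGraph α} {K : SimpleGraph β} (f : α → β)
    (hf : ∀ x y, H.Adj x y → f x = f y ∨ K.Adj (f x) (f y)) {x y : α}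
    (h : H.Reachable x y) : K.Reachable (f x) (f y) := by
  obtain ⟨w⟩ := h
  induction w with
  | nil => exact Reachable.refl _
  | cons hadj p ih =>
    rcases hf _ _ hadj with he | ha
    · rw [he]; exact ih
    · exact (Adj.reachable ha).trans ih

/-- Lift a walk whose support lies in `S` and whose edges avoid `E` to a reachability
statement in the induced graph with the (preimage of the) edges deleted. -/
lemma reach_induce_del {H : SimpleGraph α} {S : Set α} {E : Set (Sym2 α)} :
    ∀ {x y : α} (w : H.Walk x y) (hx : x ∈ S) (hy : y ∈ S),
      (∀ z ∈ w.support, z ∈ S) → (∀ e ∈ w.edges, e ∉ E) →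
      ((H.induce S).deleteEdges {e | Sym2.map Subtype.val e ∈ E}).Reachable ⟨x, hx⟩ ⟨y, hy⟩ := by
  intro x y w
  induction w with
  | nil => intro hx hy _ _; exact Reachable.refl _
  | @cons a b c hadj p ih =>
    intro hx hy hsupp hedge
    have hb : b ∈ S := hsupp b (by simp [SimpleGraph.Walk.support_cons])
    have h1 : ((H.induce S).deleteEdges {e | Sym2.map Subtype.val e ∈ E}).Adj ⟨a, hx⟩ ⟨b, hb⟩ := by
      rw [SimpleGraph.deleteEdges_adj]
      refine ⟨hadj, ?_⟩
      intro hmem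
      exact hedge s(a, b) (by simp [SimpleGraph.Walk.edges_cons]) (by simpa using hmem)
    refine (Adj.reachable h1).trans (ih hb hy ?_ ?_)
    · intro z hz; exact hsupp z (by simp [SimpleGraph.Walk.support_cons, hz])
    · intro e he; exact hedge e (by simp [SimpleGraph.Walk.edges_cons, he])

/-- From an isolated vertex one can reach only itself. -/
lemma isolated_eq_of_reachable {H : SimpleGraph α} {x y : α}
    (hx : ∀ z, ¬ H.Adj x z) (h : H.Reachable x y) : x = y := by
  obtain ⟨w⟩ := h
  cases w with
  | nil => rfl
  | cons hadj p => exact absurd hadj (hx _)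

/-- A nonnil walk ending at `y` contains an edge incident with `y`. -/
lemma exists_edge_end {H : SimpleGraph α} :
    ∀ {x y : α} (w : H.Walk x y), ¬ w.Nil → ∃ e ∈ w.edges, y ∈ e := by
  intro x y w
  induction w with
  | nil => intro h; exact absurd SimpleGraph.Walk.nil_nil h
  | @cons a b c hadj p ih =>
    intro _
    by_cases hp : p.Nil
    · cases p with
      | nil => exact ⟨s(a, b), by simp, by simp⟩
      | cons h q => simp at hp
    · obtain ⟨e, he, hye⟩ := ih hp
      exact ⟨e, by simp [he], hye⟩

end Infra

section CutMim

variable {V : Type*} (G : SimpleGraph V) (X Y : Set V)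

lemma isInducedCutMatching_empty : IsInducedCutMatching G X Y ∅ := by
  constructor <;> simp

lemma cutmim_set_nonempty :
    {n : ℕ | ∃ M : Finset (V × V), IsInducedCutMatching G X Y M ∧ M.card = n}.Nonempty :=
  ⟨0, ∅, isInducedCutMatching_empty G X Y, rfl⟩

variable {G X Y}

lemma IsInducedCutMatching.card_le [Finite V] {M : Finset (V × V)}
    (h : IsInducedCutMatching G X Y M) : M.card ≤ Nat.card V := by
  classical
  have := Fintype.ofFinite V
  have hinj : Set.InjOn Prod.fst (M : Set (V × V)) := by
    intro p hp q hq hpq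
    by_contra hne
    exact (h.2 p hp q hq hne).1 hpq
  calc M.card = (M.image Prod.fst).card := (Finset.card_image_of_injOn hinj).symm
    _ ≤ Fintype.card V := Finset.card_le_univ _
    _ = Nat.card V := (Nat.card_eq_fintype_card).symm

lemma nat_sSup_le {s : Set ℕ} {m : ℕ} (h : ∀ n ∈ s, n ≤ m) : sSup s ≤ m := by
  rcases s.eq_empty_or_nonempty with rfl | hne
  · simp [csSup_empty]
  · exact csSup_le hne h

lemma cutmim_bddAbove [Finite V] :
    BddAbove {n : ℕ | ∃ M : Finset (V × V), IsInducedCutMatching G X Y M ∧ M.card = n} := by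
  refine ⟨Nat.card V, ?_⟩
  rintro n ⟨M, hM, rfl⟩
  exact hM.card_le

lemma cutmim_le_natcard [Finite V] : cutmim G X Y ≤ Nat.card V := by
  apply nat_sSup_le
  rintro n ⟨M, hM, rfl⟩
  exact hM.card_le

lemma le_cutmim [Finite V] {M : Finset (V × V)} (h : IsInducedCutMatching G X Y M) :
    M.card ≤ cutmim G X Y :=
  le_csSup cutmim_bddAbove ⟨M, h, rfl⟩

lemma cutmim_le_one_right (hY : Y.Subsingleton) : cutmim G X Y ≤ 1 := by
  apply nat_sSup_le
  rintro n ⟨M, hM, rfl⟩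
  refine Finset.card_le_one.2 ?_
  intro p hp q hq
  by_contra hne
  exact (hM.2 p hp q hq hne).2.1 (hY (hM.1 p hp).2.1 (hM.1 q hq).2.1)

lemma cutmim_le_one_left (hX : X.Subsingleton) : cutmim G X Y ≤ 1 := by
  apply nat_sSup_le
  rintro n ⟨M, hM, rfl⟩
  refine Finset.card_le_one.2 ?_
  intro p hp q hq
  by_contra hne
  exact (hM.2 p hp q hq hne).1 (hX (hM.1 p hp).1 (hM.1 q hq).1)

end CutMim
section Transfer

variable {V : Type*} [Finite V] {G : SimpleGraph V} {u v : V}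
  {G' : SimpleGraph (V ⊕ Unit)}

variable (hG' : ∀ a b : V ⊕ Unit, G'.Adj a b ↔
      ((∃ x y : V, a = Sum.inl x ∧ b = Sum.inl y ∧ G.Adj x y ∧ s(x, y) ≠ s(u, v)) ∨
       (∃ x : V, (x = u ∨ x = v) ∧
        ((a = Sum.inl x ∧ b = Sum.inr ()) ∨ (a = Sum.inr () ∧ b = Sum.inl x)))))

include hG'

lemma adj_inl_inl {x y : V} : G'.Adj (Sum.inl x) (Sum.inl y) ↔ G.Adj x y ∧ s(x, y) ≠ s(u, v) := by
  rw [hG']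
  constructor
  · rintro (⟨x', y', hx, hy, h⟩ | ⟨x', _, (⟨h1, h2⟩ | ⟨h1, h2⟩)⟩)
    · cases Sum.inl_injective hx; cases Sum.inl_injective hy; exact h
    · exact absurd h2 (by simp)
    · exact absurd h1 (by simp)
  · intro h; exact Or.inl ⟨x, y, rfl, rfl, h⟩

lemma adj_inl_inr {x : V} : G'.Adj (Sum.inl x) (Sum.inr ()) ↔ x = u ∨ x = v := by
  rw [hG']
  constructor
  · rintro (⟨x', y', hx, hy, h⟩ | ⟨x', hx', (⟨h1, h2⟩ | ⟨h1, h2⟩)⟩)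
    · exact absurd hy (by simp)
    · cases Sum.inl_injective h1; exact hx'
    · exact absurd h1 (by simp)
  · intro h; exact Or.inr ⟨x, h, Or.inl ⟨rfl, rfl⟩⟩

lemma adj_inr_inl {x : V} : G'.Adj (Sum.inr ()) (Sum.inl x) ↔ x = u ∨ x = v := by
  rw [G'.adj_comm]; exact adj_inl_inr hG'

lemma not_adj_inr_inr : ¬ G'.Adj (Sum.inr ()) (Sum.inr ()) := G'.irrefl

/-- Transfer of an induced matching from `G` across `(X, Xᶜ)` to `G'`, where
`X = {x | inl x ∈ X'}`.  This gives `cutmim G X Xᶜ ≤ cutmim G' X' X'ᶜ`. -/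
lemma cutmim_le_cutmim_subdiv (huv : G.Adj u v) (X' : Set (V ⊕ Unit)) :
    cutmim G {x : V | Sum.inl x ∈ X'} {x : V | Sum.inl x ∈ X'}ᶜ ≤ cutmim G' X' X'ᶜ := by
  classical
  set X : Set V := {x : V | Sum.inl x ∈ X'} with hX
  apply nat_sSup_le
  rintro n ⟨M, hM, rfl⟩
  -- image of a sub-matching all of whose pairs avoid s(u,v)
  have himg : ∀ N : Finset (V × V), N ⊆ M → (∀ p ∈ N, s(p.1, p.2) ≠ s(u, v)) →
      IsInducedCutMatching G' X' X'ᶜ (N.image (fun p => ((Sum.inl p.1 : V ⊕ Unit), (Sum.inl p.2 : V ⊕ Unit)))) := by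
    intro N hNM hNs
    have hmem : ∀ r ∈ N.image (fun p => ((Sum.inl p.1 : V ⊕ Unit), (Sum.inl p.2 : V ⊕ Unit))),
        ∃ p ∈ N, r = ((Sum.inl p.1 : V ⊕ Unit), (Sum.inl p.2 : V ⊕ Unit)) := by
      intro r hr
      obtain ⟨p, hp, rfl⟩ := Finset.mem_image.1 hr
      exact ⟨p, hp, rfl⟩
    constructor
    · intro r hr
      obtain ⟨p, hp, rfl⟩ := hmem r hr
      obtain ⟨h1, h2, h3⟩ := hM.1 p (hNM hp)
      exact ⟨h1, fun hc => h2 hc, (adj_inl_inl hG').2 ⟨h3, hNs p hp⟩⟩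
    · intro r hr r' hr' hne
      obtain ⟨p, hp, rfl⟩ := hmem r hr
      obtain ⟨q, hq, rfl⟩ := hmem r' hr'
      have hpq : p ≠ q := by rintro rfl; exact hne rfl
      obtain ⟨d1, d2, d3, d4, d5, d6⟩ := hM.2 p (hNM hp) q (hNM hq) hpq
      refine ⟨by simpa using d1, by simpa using d2, by simpa using d3, by simpa using d4, ?_, ?_⟩
      · intro hc; exact d5 ((adj_inl_inl hG').1 hc).1
      · intro hc; exact d6 ((adj_inl_inl hG').1 hc).1
  by_cases hex : ∃ p ∈ M, s(p.1, p.2) = s(u, v)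
  · obtain ⟨p₀, hp₀M, hp₀⟩ := hex
    have hp₀uv : (p₀.1 = u ∧ p₀.2 = v) ∨ (p₀.1 = v ∧ p₀.2 = u) := by
      rwa [Sym2.eq_iff] at hp₀
    have hne_p₀ : ∀ q ∈ M, q ≠ p₀ → s(q.1, q.2) ≠ s(u, v) := by
      intro q hq hqne hc
      rw [Sym2.eq_iff] at hc
      obtain ⟨d1, _, d3, _, _, _⟩ := hM.2 q hq p₀ hp₀M hqne
      rcases hc with ⟨h1, h2⟩ | ⟨h1, h2⟩ <;> rcases hp₀uv with ⟨g1, g2⟩ | ⟨g1, g2⟩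
      · exact d1 (h1.trans g1.symm)
      · exact d3 (h1.trans g2.symm)
      · exact d3 (h1.trans g2.symm)
      · exact d1 (h1.trans g1.symm)
    set N := M.erase p₀ with hN
    have hNsub : N ⊆ M := Finset.erase_subset _ _
    have hNs : ∀ p ∈ N, s(p.1, p.2) ≠ s(u, v) := fun p hp =>
      hne_p₀ p (hNsub hp) (Finset.ne_of_mem_erase hp)
    have hNm := himg N hNsub hNs
    -- the pair using the new vertex
    set wp : (V ⊕ Unit) × (V ⊕ Unit) :=
      if Sum.inr () ∈ X' then (Sum.inr (), Sum.inl p₀.2) else (Sum.inl p₀.1, Sum.inr ()) with hwp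
    have hp₀mem := hM.1 p₀ hp₀M
    have hwp1 : wp.1 ∈ X' := by
      rw [hwp]; split
      · simpa using ‹Sum.inr () ∈ X'›
      · exact hp₀mem.1
    have hwp2 : wp.2 ∈ X'ᶜ := by
      rw [hwp]; split
      · exact hp₀mem.2.1
      · simpa using ‹Sum.inr () ∉ X'›
    have hwpadj : G'.Adj wp.1 wp.2 := by
      rw [hwp]; split
      · exact (adj_inr_inl hG').2 (by rcases hp₀uv with ⟨_, h⟩ | ⟨_, h⟩ <;> simp [h])
      · exact (adj_inl_inr hG').2 (by rcases hp₀uv with ⟨h, _⟩ | ⟨h, _⟩ <;> simp [h])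
    -- conditions between wp and an image pair
    have hwpvs : ∀ q ∈ N, 
        wp.1 ≠ Sum.inl q.1 ∧ wp.2 ≠ Sum.inl q.2 ∧ wp.1 ≠ Sum.inl q.2 ∧ wp.2 ≠ Sum.inl q.1 ∧
        ¬ G'.Adj wp.1 (Sum.inl q.2) ∧ ¬ G'.Adj (Sum.inl q.1) wp.2 := by
      intro q hq
      have hqM := hNsub hq
      have hqne : q ≠ p₀ := Finset.ne_of_mem_erase hq
      obtain ⟨d1, d2, d3, d4, d5, d6⟩ := hM.2 q hqM p₀ hp₀M hqne
      have hq1uv : q.1 ≠ u ∧ q.1 ≠ v := by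
        rcases hp₀uv with ⟨g1, g2⟩ | ⟨g1, g2⟩
        · exact ⟨fun h => d1 (h.trans g1.symm), fun h => d3 (h.trans g2.symm)⟩
        · exact ⟨fun h => d3 (h.trans g2.symm), fun h => d1 (h.trans g1.symm)⟩
      have hq2uv : q.2 ≠ u ∧ q.2 ≠ v := by
        rcases hp₀uv with ⟨g1, g2⟩ | ⟨g1, g2⟩
        · exact ⟨fun h => d4 (h.trans g1.symm), fun h => d2 (h.trans g2.symm)⟩
        · exact ⟨fun h => d2 (h.trans g2.symm), fun h => d4 (h.trans g1.symm)⟩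
      rw [hwp]; split
      · refine ⟨by simp, by simpa using fun h => d2 h.symm, by simp, 
          by simpa using fun h => d3 h.symm, ?_, ?_⟩
        · intro hc
          rcases (adj_inr_inl hG').1 hc with h | h
          · exact hq2uv.1 h
          · exact hq2uv.2 h
        · intro hc
          exact d5 ((adj_inl_inl hG').1 hc).1
      · refine ⟨by simpa using fun h => d1 h.symm, by simp, 
          by simpa using fun h => d4 h.symm, by simp, ?_, ?_⟩
        · intro hc
          exact d6 ((adj_inl_inl hG').1 hc).1
        · intro hc
          rcases (adj_inl_inr hG').1 hc with h | h
          · exact hq1uv.1 h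
          · exact hq1uv.2 h
    set M' := insert wp (N.image (fun p => ((Sum.inl p.1 : V ⊕ Unit), (Sum.inl p.2 : V ⊕ Unit)))) with hM'
    have hwpnot : wp ∉ N.image (fun p => (Sum.inl p.1, Sum.inl p.2)) := by
      intro hc
      obtain ⟨q, hq, hqe⟩ := Finset.mem_image.1 hc
      rw [hwp] at hqe
      split at hqe
      · exact absurd (congrArg Prod.fst hqe) (by simp)
      · exact absurd (congrArg Prod.snd hqe) (by simp)
    have hcard : M'.card = M.card := by
      rw [hM', Finset.card_insert_of_notMem hwpnot, Finset.card_image_of_injOn]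
      · rw [hN, Finset.card_erase_of_mem hp₀M]
        have : 1 ≤ M.card := Finset.card_pos.2 ⟨p₀, hp₀M⟩
        omega
      · intro p _ q _ h
        have h1 := congrArg Prod.fst h
        have h2 := congrArg Prod.snd h
        simp only [Sum.inl.injEq] at h1 h2
        exact Prod.ext h1 h2
    have hM'icm : IsInducedCutMatching G' X' X'ᶜ M' := by
      constructor
      · intro r hr
        rcases Finset.mem_insert.1 hr with rfl | hr'
        · exact ⟨hwp1, hwp2, hwpadj⟩
        · exact hNm.1 r hr'
      · intro r hr r' hr' hne
        rcases Finset.mem_insert.1 hr with rfl | hr1 <;> rcases Finset.mem_insert.1 hr' with rfl | hr2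
        · exact absurd rfl hne
        · obtain ⟨q, hq, rfl⟩ := Finset.mem_image.1 hr2
          obtain ⟨e1, e2, e3, e4, e5, e6⟩ := hwpvs q hq
          exact ⟨e1, e2, e3, e4, e5, e6⟩
        · obtain ⟨q, hq, rfl⟩ := Finset.mem_image.1 hr1
          obtain ⟨e1, e2, e3, e4, e5, e6⟩ := hwpvs q hq
          exact ⟨e1.symm, e2.symm, e4.symm, e3.symm, e6, e5⟩
        · exact hNm.2 r hr1 r' hr2 hne
    calc M.card = M'.card := hcard.symm
      _ ≤ cutmim G' X' X'ᶜ := le_cutmim hM'icm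
  · push_neg at hex
    have h := himg M le_rfl.subset hex
    have hcard : (M.image (fun p => ((Sum.inl p.1 : V ⊕ Unit), (Sum.inl p.2 : V ⊕ Unit)))).card = M.card := by
      apply Finset.card_image_of_injOn
      intro p _ q _ h
      have h1 := congrArg Prod.fst h
      have h2 := congrArg Prod.snd h
      simp only [Sum.inl.injEq] at h1 h2
      exact Prod.ext h1 h2
    calc M.card = _ := hcard.symm
      _ ≤ cutmim G' X' X'ᶜ := le_cutmim h

end Transfer

section Transfer2

variable {V : Type*} [Finite V] {G : SimpleGraph V} {u v : V}
  {G' : SimpleGraph (V ⊕ Unit)}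

variable (hG' : ∀ a b : V ⊕ Unit, G'.Adj a b ↔
      ((∃ x y : V, a = Sum.inl x ∧ b = Sum.inl y ∧ G.Adj x y ∧ s(x, y) ≠ s(u, v)) ∨
       (∃ x : V, (x = u ∨ x = v) ∧
        ((a = Sum.inl x ∧ b = Sum.inr ()) ∨ (a = Sum.inr () ∧ b = Sum.inl x)))))

include hG'

lemma cutmim_subdiv_le (X' : Set (V ⊕ Unit)) (X : Set V)
    (h1 : ∀ x : V, Sum.inl x ∈ X' ↔ x ∈ X) (h2 : Sum.inr () ∈ X' ↔ u ∈ X) :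
    cutmim G' X' X'ᶜ ≤ cutmim G X Xᶜ + 1 := by
  classical
  apply nat_sSup_le
  rintro n ⟨M', hM', rfl⟩
  set Mw : Finset ((V ⊕ Unit) × (V ⊕ Unit)) :=
    M'.filter (fun p => p.1 = Sum.inr () ∨ p.2 = Sum.inr ()) with hMw
  set M₀ : Finset ((V ⊕ Unit) × (V ⊕ Unit)) :=
    M'.filter (fun p => ¬ (p.1 = Sum.inr () ∨ p.2 = Sum.inr ())) with hM₀
  have hsplit : Mw.card + M₀.card = M'.card := Finset.card_filter_add_card_filter_not _
  have hshape : ∀ p ∈ M₀, ∃ a b : V, p = (Sum.inl a, Sum.inl b) := by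
    intro p hp
    have hcond := (Finset.mem_filter.1 hp).2
    push_neg at hcond
    obtain ⟨p1, p2⟩ := p
    rcases p1 with a | x
    · rcases p2 with b | y
      · exact ⟨a, b, rfl⟩
      · cases y
        exact (hcond.2 rfl).elim
    · cases x
      exact (hcond.1 rfl).elim
  set proj : (V ⊕ Unit) × (V ⊕ Unit) → V × V :=
    fun p => (Sum.elim id (fun _ => u) p.1, Sum.elim id (fun _ => u) p.2) with hproj
  set M₁ : Finset (V × V) := M₀.image proj with hM₁
  have hmem₁ : ∀ r : V × V, r ∈ M₁ ↔ (Sum.inl r.1, Sum.inl r.2) ∈ M' := by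
    intro r
    constructor
    · intro hr
      obtain ⟨p, hp, rfl⟩ := Finset.mem_image.1 hr
      obtain ⟨a, b, rfl⟩ := hshape p hp
      exact (Finset.mem_filter.1 hp).1
    · intro hr
      apply Finset.mem_image.2
      refine ⟨(Sum.inl r.1, Sum.inl r.2), Finset.mem_filter.2 ⟨hr, by simp⟩, rfl⟩
  have hcard₁ : M₁.card = M₀.card := by
    apply Finset.card_image_of_injOn
    intro p hp q hq h
    obtain ⟨a, b, rfl⟩ := hshape p hp
    obtain ⟨c, d, rfl⟩ := hshape q hq
    simpa [hproj, Prod.ext_iff] using h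
  have hbase : ∀ r ∈ M₁, r.1 ∈ X ∧ r.2 ∈ Xᶜ ∧ G.Adj r.1 r.2 := by
    intro r hr
    obtain ⟨m1, m2, m3⟩ := hM'.1 _ ((hmem₁ r).1 hr)
    exact ⟨(h1 r.1).1 m1, fun hc => m2 ((h1 r.2).2 hc), ((adj_inl_inl hG').1 m3).1⟩
  have hdist : ∀ r ∈ M₁, ∀ r' ∈ M₁, r ≠ r' →
      r.1 ≠ r'.1 ∧ r.2 ≠ r'.2 ∧ r.1 ≠ r'.2 ∧ r.2 ≠ r'.1 := by
    intro r hr r' hr' hne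
    have hne' : (Sum.inl r.1, Sum.inl r.2) ≠ ((Sum.inl r'.1 : V ⊕ Unit), (Sum.inl r'.2 : V ⊕ Unit)) := by
      simp only [Ne, Prod.ext_iff, Sum.inl.injEq, not_and]
      intro hc1 hc2
      exact hne (Prod.ext hc1 hc2)
    obtain ⟨d1, d2, d3, d4, _, _⟩ := hM'.2 _ ((hmem₁ r).1 hr) _ ((hmem₁ r').1 hr') hne'
    exact ⟨by simpa using d1, by simpa using d2, by simpa using d3, by simpa using d4⟩
  have hnadj : ∀ r ∈ M₁, ∀ r' ∈ M₁, r ≠ r' → G.Adj r.1 r'.2 →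
      (r.1 = u ∧ r'.2 = v) ∨ (r.1 = v ∧ r'.2 = u) := by
    intro r hr r' hr' hne hadj
    have hne' : (Sum.inl r.1, Sum.inl r.2) ≠ ((Sum.inl r'.1 : V ⊕ Unit), (Sum.inl r'.2 : V ⊕ Unit)) := by
      simp only [Ne, Prod.ext_iff, Sum.inl.injEq, not_and]
      intro hc1 hc2
      exact hne (Prod.ext hc1 hc2)
    obtain ⟨_, _, _, _, d5, _⟩ := hM'.2 _ ((hmem₁ r).1 hr) _ ((hmem₁ r').1 hr') hne'
    rw [← Sym2.eq_iff]
    by_contra hs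
    exact d5 ((adj_inl_inl hG').2 ⟨hadj, hs⟩)
  by_cases hMwne : Mw.Nonempty
  · -- a pair uses the subdivision vertex; the projection of the rest is induced
    obtain ⟨pw, hpw⟩ := hMwne
    have hpwM : pw ∈ M' := (Finset.mem_filter.1 hpw).1
    have hpwc := (Finset.mem_filter.1 hpw).2
    have hMwsing : Mw = {pw} := by
      apply Finset.eq_singleton_iff_unique_mem.2
      refine ⟨hpw, ?_⟩
      intro q hq
      have hqM : q ∈ M' := (Finset.mem_filter.1 hq).1
      have hqc := (Finset.mem_filter.1 hq).2
      by_contra hne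
      obtain ⟨d1, d2, d3, d4, _, _⟩ := hM'.2 q hqM pw hpwM hne
      rcases hqc with h | h <;> rcases hpwc with h' | h'
      · exact d1 (h.trans h'.symm)
      · exact d3 (h.trans h'.symm)
      · exact d4 (h.trans h'.symm)
      · exact d2 (h.trans h'.symm)
    have hcards : M₁.card + 1 = M'.card := by
      rw [hcard₁, ← hsplit, hMwsing]
      simp [add_comm]
    have hviol : ∀ r ∈ M₁, ∀ r' ∈ M₁, r ≠ r' → ¬ G.Adj r.1 r'.2 := by
      intro r hr r' hr' hne hadj
      have hs := hnadj r hr r' hr' hne hadj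
      have hrpw : (Sum.inl r.1, Sum.inl r.2) ≠ pw := by
        intro hc
        rcases hpwc with h | h
        · exact absurd (congrArg Prod.fst hc |>.trans h) (by simp)
        · exact absurd (congrArg Prod.snd hc |>.trans h) (by simp)
      have hr'pw : (Sum.inl r'.1, Sum.inl r'.2) ≠ pw := by
        intro hc
        rcases hpwc with h | h
        · exact absurd (congrArg Prod.fst hc |>.trans h) (by simp)
        · exact absurd (congrArg Prod.snd hc |>.trans h) (by simp)
      obtain ⟨e1, e2, e3, e4, _, _⟩ := hM'.2 _ ((hmem₁ r).1 hr) pw hpwM hrpw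
      obtain ⟨f1, f2, f3, f4, _, _⟩ := hM'.2 _ ((hmem₁ r').1 hr') pw hpwM hr'pw
      rcases hpwc with h | h
      · -- pw.1 = inr (), hence u ∈ X and pw.2 = inl v with v ∉ X
        obtain ⟨m1, m2, m3⟩ := hM'.1 pw hpwM
        rw [h] at m1 m3
        have hu : u ∈ X := h2.1 m1
        obtain ⟨c, hc⟩ : ∃ c, pw.2 = Sum.inl c := by
          rcases hpw2 : pw.2 with c | y
          · exact ⟨c, rfl⟩
          · rw [hpw2] at m2; cases y; exact absurd m1 m2
        rw [hc] at m2 m3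
        have hcuv : c = u ∨ c = v := (adj_inr_inl hG').1 m3
        have hcnX : c ∉ X := fun hcc => m2 ((h1 c).2 hcc)
        have hcv : c = v := by
          rcases hcuv with rfl | rfl
          · exact absurd hu hcnX
          · rfl
        rcases hs with ⟨hh1, hh2⟩ | ⟨hh1, hh2⟩
        · -- r'.2 = v = c : contradicts f2 : inl r'.2 ≠ pw.2 = inl c
          rw [hc] at f2
          exact f2 (by rw [hh2, hcv])
        · -- r.1 = v impossible since v ∉ X
          exact hcnX (hcv ▸ (hh1 ▸ (hbase r hr).1))
      · -- pw.2 = inr (), hence u ∉ X and pw.1 = inl v with v ∈ X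
        obtain ⟨m1, m2, m3⟩ := hM'.1 pw hpwM
        rw [h] at m2 m3
        have hu : u ∉ X := fun hc => m2 (h2.2 hc)
        obtain ⟨c, hc⟩ : ∃ c, pw.1 = Sum.inl c := by
          rcases hpw1 : pw.1 with c | y
          · exact ⟨c, rfl⟩
          · rw [hpw1] at m1; cases y; exact absurd (h2.1 m1) hu
        rw [hc] at m1 m3
        have hcuv : c = u ∨ c = v := (adj_inl_inr hG').1 m3
        have hcX : c ∈ X := (h1 c).1 m1
        have hcv : c = v := by
          rcases hcuv with rfl | rfl
          · exact absurd hcX hu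
          · rfl
        rcases hs with ⟨hh1, hh2⟩ | ⟨hh1, hh2⟩
        · -- r.1 = u impossible since u ∉ X
          exact hu (hh1 ▸ (hbase r hr).1)
        · -- r.1 = v = c : contradicts e1 : inl r.1 ≠ pw.1 = inl c
          rw [hc] at e1
          exact e1 (by rw [hh1, hcv])
    have hicm : IsInducedCutMatching G X Xᶜ M₁ := by
      refine ⟨hbase, ?_⟩
      intro r hr r' hr' hne
      obtain ⟨d1, d2, d3, d4⟩ := hdist r hr r' hr' hne
      exact ⟨d1, d2, d3, d4, hviol r hr r' hr' hne, hviol r' hr' r hr hne.symm⟩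
    calc M'.card = M₁.card + 1 := hcards.symm
      _ ≤ cutmim G X Xᶜ + 1 := by
          have := le_cutmim hicm
          omega
  · -- no pair uses the subdivision vertex
    have hM₀M : M₀ = M' := by
      rw [hM₀, Finset.filter_eq_self]
      intro p hp
      intro hc
      exact hMwne ⟨p, Finset.mem_filter.2 ⟨hp, hc⟩⟩
    have hcards : M₁.card = M'.card := by rw [hcard₁, hM₀M]
    by_cases hvex : ∃ r ∈ M₁, ∃ r' ∈ M₁, r ≠ r' ∧ G.Adj r.1 r'.2
    · obtain ⟨r₀, hr₀, r₀', hr₀', hne₀, hadj₀⟩ := hvex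
      have hs₀ := hnadj r₀ hr₀ r₀' hr₀' hne₀ hadj₀
      have huniq : ∀ r ∈ M₁, ∀ r' ∈ M₁, r ≠ r' → G.Adj r.1 r'.2 → r = r₀ := by
        intro r hr r' hr' hne hadj
        have hs := hnadj r hr r' hr' hne hadj
        rcases hs with ⟨hh1, hh2⟩ | ⟨hh1, hh2⟩ <;> rcases hs₀ with ⟨gg1, gg2⟩ | ⟨gg1, gg2⟩
        · by_contra hc
          exact (hdist r hr r₀ hr₀ hc).1 (hh1.trans gg1.symm)
        · -- r.1 = u = r₀'.2
          by_cases hc : r = r₀'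
          · subst hc
            exact absurd (hh1 ▸ (hbase r hr).1) (gg2 ▸ (hbase r hr).2.1)
          · exact absurd (hh1.trans gg2.symm) (hdist r hr r₀' hr₀' hc).2.2.1
        · -- r.1 = v = r₀'.2
          by_cases hc : r = r₀'
          · subst hc
            exact absurd (hh1 ▸ (hbase r hr).1) (gg2 ▸ (hbase r hr).2.1)
          · exact absurd (hh1.trans gg2.symm) (hdist r hr r₀' hr₀' hc).2.2.1
        · by_contra hc
          exact (hdist r hr r₀ hr₀ hc).1 (hh1.trans gg1.symm)
      set M₂ := M₁.erase r₀ with hM₂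
      have hicm : IsInducedCutMatching G X Xᶜ M₂ := by
        constructor
        · intro r hr; exact hbase r (Finset.mem_of_mem_erase hr)
        · intro r hr r' hr' hne
          have hrM₁ : r ∈ M₁ := Finset.mem_of_mem_erase hr
          have hr'M₁ : r' ∈ M₁ := Finset.mem_of_mem_erase hr'
          obtain ⟨d1, d2, d3, d4⟩ := hdist r hrM₁ r' hr'M₁ hne
          refine ⟨d1, d2, d3, d4, ?_, ?_⟩
          · intro hadj
            exact Finset.ne_of_mem_erase hr (huniq r hrM₁ r' hr'M₁ hne hadj)
          · intro hadj
            exact Finset.ne_of_mem_erase hr' (huniq r' hr'M₁ r hrM₁ hne.symm hadj)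
      have hM₂card : M₂.card + 1 = M₁.card := by
        rw [hM₂, Finset.card_erase_of_mem hr₀]
        have : 1 ≤ M₁.card := Finset.card_pos.2 ⟨r₀, hr₀⟩
        omega
      calc M'.card = M₂.card + 1 := by omega
        _ ≤ cutmim G X Xᶜ + 1 := by
            have := le_cutmim hicm
            omega
    · push_neg at hvex
      have hicm : IsInducedCutMatching G X Xᶜ M₁ := by
        refine ⟨hbase, ?_⟩
        intro r hr r' hr' hne
        obtain ⟨d1, d2, d3, d4⟩ := hdist r hr r' hr' hne
        exact ⟨d1, d2, d3, d4, hvex r hr r' hr' hne, hvex r' hr' r hr hne.symm⟩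
      calc M'.card = M₁.card := hcards.symm
        _ ≤ cutmim G X Xᶜ + 1 := le_trans (le_cutmim hicm) (Nat.le_succ _)

end Transfer2

section Pendant

variable {L : Type*}

/-- Attach a pendant vertex to the vertex `x₀`. -/
def addPendant (T : SimpleGraph L) (x₀ : L) : SimpleGraph (L ⊕ Unit) :=
  SimpleGraph.fromRel (fun a b =>
    (∃ x y, a = Sum.inl x ∧ b = Sum.inl y ∧ T.Adj x y) ∨ (a = Sum.inl x₀ ∧ b = Sum.inr ()))

variable {T : SimpleGraph L} {x₀ : L}

lemma addPendant_adj_inl_inl {x y : L} :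
    (addPendant T x₀).Adj (Sum.inl x) (Sum.inl y) ↔ T.Adj x y := by
  rw [addPendant, SimpleGraph.fromRel_adj]
  constructor
  · rintro ⟨hne, (⟨x', y', hx, hy, h⟩ | ⟨h1, h2⟩) | (⟨x', y', hx, hy, h⟩ | ⟨h1, h2⟩)⟩
    · cases Sum.inl_injective hx; cases Sum.inl_injective hy; exact h
    · exact absurd h2 (by simp)
    · cases Sum.inl_injective hx; cases Sum.inl_injective hy; exact h.symm
    · exact absurd h2 (by simp)
  · intro h
    exact ⟨by simpa using h.ne, Or.inl (Or.inl ⟨x, y, rfl, rfl, h⟩)⟩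

lemma addPendant_adj_inl_inr {x : L} :
    (addPendant T x₀).Adj (Sum.inl x) (Sum.inr ()) ↔ x = x₀ := by
  rw [addPendant, SimpleGraph.fromRel_adj]
  constructor
  · rintro ⟨hne, (⟨x', y', hx, hy, h⟩ | ⟨h1, h2⟩) | (⟨x', y', hx, hy, h⟩ | ⟨h1, h2⟩)⟩
    · exact absurd hy (by simp)
    · exact Sum.inl_injective h1
    · exact absurd hx (by simp)
    · exact absurd h1 (by simp)
  · rintro rfl
    exact ⟨by simp, Or.inl (Or.inr ⟨rfl, rfl⟩)⟩

lemma addPendant_adj_inr_inl {x : L} :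
    (addPendant T x₀).Adj (Sum.inr ()) (Sum.inl x) ↔ x = x₀ := by
  rw [SimpleGraph.adj_comm]; exact addPendant_adj_inl_inr

lemma addPendant_not_adj_inr_inr :
    ¬ (addPendant T x₀).Adj (Sum.inr ()) (Sum.inr ()) := (addPendant T x₀).irrefl

lemma addPendant_adj_inr {z : L ⊕ Unit} (h : (addPendant T x₀).Adj (Sum.inr ()) z) :
    z = Sum.inl x₀ := by
  rcases z with y | y
  · rw [addPendant_adj_inr_inl] at h; rw [h]
  · cases y; exact absurd h addPendant_not_adj_inr_inr

lemma addPendant_neighborSet_inr :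
    (addPendant T x₀).neighborSet (Sum.inr ()) = {Sum.inl x₀} := by
  ext z
  simp only [SimpleGraph.mem_neighborSet, Set.mem_singleton_iff]
  constructor
  · exact addPendant_adj_inr
  · rintro rfl; exact (addPendant_adj_inr_inl).2 rfl |>.symm.symm

lemma addPendant_neighborSet_inl_ne {y : L} (hy : y ≠ x₀) :
    (addPendant T x₀).neighborSet (Sum.inl y) = Sum.inl '' (T.neighborSet y) := by
  ext z
  rcases z with z' | z'
  · simp only [SimpleGraph.mem_neighborSet, addPendant_adj_inl_inl, Set.mem_image,
      Sum.inl.injEq]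
    constructor
    · intro h; exact ⟨z', h, rfl⟩
    · rintro ⟨w', hw, rfl⟩; exact hw
  · cases z'
    simp only [SimpleGraph.mem_neighborSet, addPendant_adj_inl_inr, Set.mem_image]
    constructor
    · intro h; exact absurd h hy
    · rintro ⟨w', _, hww⟩; exact absurd hww (by simp)

lemma addPendant_neighborSet_inl_eq :
    (addPendant T x₀).neighborSet (Sum.inl x₀) =
      Sum.inl '' (T.neighborSet x₀) ∪ {Sum.inr ()} := by
  ext z
  rcases z with z' | z'
  · simp only [SimpleGraph.mem_neighborSet, addPendant_adj_inl_inl, Set.mem_union,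
      Set.mem_image, Set.mem_singleton_iff, Sum.inl.injEq]
    constructor
    · intro h; exact Or.inl ⟨z', h, rfl⟩
    · rintro (⟨w', hw, rfl⟩ | h)
      · exact hw
      · exact absurd h (by simp)
  · cases z'
    simp [SimpleGraph.mem_neighborSet, addPendant_adj_inl_inr]

lemma addPendant_ncard_inr : ((addPendant T x₀).neighborSet (Sum.inr ())).ncard = 1 := by
  rw [addPendant_neighborSet_inr]; simp

lemma addPendant_ncard_inl_ne {y : L} (h : y ≠ x₀) :
    ((addPendant T x₀).neighborSet (Sum.inl y)).ncard = (T.neighborSet y).ncard := by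
  rw [addPendant_neighborSet_inl_ne h, Set.ncard_image_of_injective _ Sum.inl_injective]

lemma addPendant_ncard_inl_eq [Finite L] :
    ((addPendant T x₀).neighborSet (Sum.inl x₀)).ncard = (T.neighborSet x₀).ncard + 1 := by
  rw [addPendant_neighborSet_inl_eq]
  have hd : Disjoint (Sum.inl '' (T.neighborSet x₀)) ({Sum.inr ()} : Set (L ⊕ Unit)) := by
    simp [Set.disjoint_singleton_right]
  rw [Set.ncard_union_eq hd (Set.toFinite _) (Set.toFinite _),
    Set.ncard_image_of_injective _ Sum.inl_injective, Set.ncard_singleton]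

lemma addPendant_connected (hT : T.Connected) : (addPendant T x₀).Connected := by
  have hreach : ∀ z : L ⊕ Unit, (addPendant T x₀).Reachable z (Sum.inl x₀) := by
    intro z
    rcases z with y | y
    · have : T.Reachable y x₀ := hT.preconnected y x₀
      exact reach_of_adjImp Sum.inl
        (fun a b hab => Or.inr (addPendant_adj_inl_inl.2 hab)) this
    · cases y
      exact ((addPendant_adj_inr_inl).2 rfl).reachable
  constructor
  · intro a b
    exact (hreach a).trans (hreach b).symm

lemma addPendant_strip :
    ∀ {a b : L ⊕ Unit} (w : (addPendant T x₀).Walk a b)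
      (_ : ∀ z ∈ w.support, ∃ z', z = Sum.inl z') {a' b' : L}
      (_ : a = Sum.inl a') (_ : b = Sum.inl b'),
      ∃ w' : T.Walk a' b', w'.support.map Sum.inl = w.support ∧
        w'.edges.map (Sym2.map Sum.inl) = w.edges := by
  intro a b w
  induction w with
  | nil =>
    intro h a' b' ha hb
    cases ha
    cases Sum.inl_injective hb
    exact ⟨SimpleGraph.Walk.nil, by simp, by simp⟩
  | @cons p q r hadj w ih =>
    intro h a' b' ha hb
    subst ha hb
    obtain ⟨c', hc⟩ := h q (by simp [SimpleGraph.Walk.support_cons])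
    subst hc
    have hadj' : T.Adj a' c' := addPendant_adj_inl_inl.1 hadj
    obtain ⟨w', hs, he⟩ := ih (fun z hz => h z (by simp [SimpleGraph.Walk.support_cons, hz]))
      rfl rfl
    refine ⟨SimpleGraph.Walk.cons hadj' w', ?_, ?_⟩
    · simp [SimpleGraph.Walk.support_cons, hs]
    · simp [SimpleGraph.Walk.edges_cons, he]

lemma addPendant_isAcyclic (hT : T.IsAcyclic) : (addPendant T x₀).IsAcyclic := by
  classical
  intro a c hc
  have hinr : (Sum.inr () : L ⊕ Unit) ∉ c.support := by
    intro hmem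
    have hc' := hc.rotate hmem
    generalize hdd : c.rotate _ hmem = d at hc'
    cases d with
    | nil => exact absurd hc'.three_le_length (by simp)
    | @cons _ y _ hadj q =>
      have hy : y = Sum.inl x₀ := addPendant_adj_inr hadj
      subst hy
      have hqlen : 2 ≤ q.length := by
        have h3 := hc'.three_le_length
        simp only [SimpleGraph.Walk.length_cons] at h3
        omega
      have hqnil : ¬ q.Nil := by
        rw [SimpleGraph.Walk.nil_iff_length_eq]
        omega
      obtain ⟨e, he, hye⟩ := exists_edge_end q hqnil
      obtain ⟨z, hz⟩ := Sym2.mem_iff_exists.1 hye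
      subst hz
      have hez : (addPendant T x₀).Adj (Sum.inr ()) z := q.edges_subset_edgeSet he
      have hzx : z = Sum.inl x₀ := addPendant_adj_inr hez
      subst hzx
      have hnodup := hc'.edges_nodup
      simp only [SimpleGraph.Walk.edges_cons, List.nodup_cons] at hnodup
      exact hnodup.1 he
  have hall : ∀ z ∈ c.support, ∃ z', z = Sum.inl z' := by
    intro z hz
    rcases z with z' | z'
    · exact ⟨z', rfl⟩
    · cases z'; exact absurd hz hinr
  obtain ⟨a', ha⟩ := hall a c.start_mem_support
  subst ha
  obtain ⟨w', hs, he⟩ := addPendant_strip c hall rfl rfl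
  refine hT w' ?_
  have hedges : w'.edges.Nodup := by
    have h1 := hc.edges_nodup
    rw [← he] at h1
    exact h1.of_map
  have hnenil : w' ≠ SimpleGraph.Walk.nil := by
    intro hnil
    have h0 : c.edges = [] := by rw [← he, hnil]; simp
    have h3 := hc.three_le_length
    rw [← SimpleGraph.Walk.length_edges, h0] at h3
    simp at h3
  have hsupp : w'.support.tail.Nodup := by
    have h1 := hc.support_nodup
    rw [← hs, ← List.map_tail] at h1
    exact h1.of_map
  exact ⟨⟨⟨hedges⟩, hnenil⟩, hsupp⟩

end Pendant

section Extend

universe upat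

variable {V : Type*} {W : Type*} {G : SimpleGraph V}

/-- Transport a branch decomposition along an equivalence of vertex types. -/
def BranchDecomp.congr {H : SimpleGraph W} (B : BranchDecomp H) (e : V ≃ W)
    (G : SimpleGraph V) : BranchDecomp G where
  L := B.L
  T := B.T
  finite := B.finite
  connected := B.connected
  acyclic := B.acyclic
  subcubic := B.subcubic
  δ := B.δ ∘ e
  δ_inj := B.δ_inj.comp e.injective
  δ_leaf := fun v => B.δ_leaf (e v)
  δ_surj := fun x hx => by
    obtain ⟨w, hw⟩ := B.δ_surj x hx
    exact ⟨e.symm w, by simp [hw]⟩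

noncomputable def extendδ (B : BranchDecomp G) (u : V) : V ⊕ Unit → (B.L ⊕ Unit) ⊕ Unit :=
  letI := Classical.decEq V
  fun z => match z with
  | Sum.inl x => if x = u then Sum.inl (Sum.inr ()) else Sum.inl (Sum.inl (B.δ x))
  | Sum.inr _ => Sum.inr ()

lemma extendδ_u (B : BranchDecomp G) (u : V) :
    extendδ B u (Sum.inl u) = Sum.inl (Sum.inr ()) := by
  simp [extendδ]

lemma extendδ_ne (B : BranchDecomp G) {u x : V} (h : x ≠ u) :
    extendδ B u (Sum.inl x) = Sum.inl (Sum.inl (B.δ x)) := by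
  simp [extendδ, h]

lemma extendδ_w (B : BranchDecomp G) (u : V) :
    extendδ B u (Sum.inr ()) = Sum.inr () := rfl

/-- Extend a branch decomposition of `G` to one of any graph on `V ⊕ Unit`, by
replacing the leaf of `u` with a cherry carrying `u` and the new vertex. -/
noncomputable def BranchDecomp.extend (B : BranchDecomp G) (u : V)
    (H : SimpleGraph (V ⊕ Unit)) : BranchDecomp H where
  L := (B.L ⊕ Unit) ⊕ Unit
  T := addPendant (addPendant B.T (B.δ u)) (Sum.inl (B.δ u))
  finite := by have := B.finite; exact inferInstance
  connected := addPendant_connected (addPendant_connected B.connected)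
  acyclic := addPendant_isAcyclic (addPendant_isAcyclic B.acyclic)
  subcubic := by
      have := B.finite
      intro z
      rcases z with z | z
      · rcases z with x | x
        · by_cases hx : x = B.δ u
          · subst hx
            rw [show (Sum.inl (Sum.inl (B.δ u)) : (B.L ⊕ Unit) ⊕ Unit) 
                = Sum.inl (Sum.inl (B.δ u)) from rfl]
            rw [addPendant_ncard_inl_eq, addPendant_ncard_inl_eq, B.δ_leaf u]
          · rw [addPendant_ncard_inl_ne (by simpa using hx), addPendant_ncard_inl_ne hx]
            exact le_trans (B.subcubic x) (by omega)
        · cases x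
          rw [addPendant_ncard_inl_ne (by simp), addPendant_ncard_inr]
          omega
      · cases z
        rw [addPendant_ncard_inr]
        omega
  δ := extendδ B u
  δ_inj := by
      intro a b hab
      rcases a with x | x <;> rcases b with y | y
      · by_cases hx : x = u <;> by_cases hy : y = u
        · rw [hx, hy]
        · rw [hx] at hab; rw [extendδ_u, extendδ_ne B hy] at hab; simp at hab
        · rw [hy] at hab; rw [extendδ_u, extendδ_ne B hx] at hab; simp at hab
        · rw [extendδ_ne B hx, extendδ_ne B hy] at hab
          simp only [Sum.inl.injEq] at hab
          rw [B.δ_inj hab]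
      · by_cases hx : x = u
        · rw [hx, extendδ_u, extendδ_w] at hab; simp at hab
        · rw [extendδ_ne B hx, extendδ_w] at hab; simp at hab
      · by_cases hy : y = u
        · rw [hy, extendδ_u, extendδ_w] at hab; simp at hab
        · rw [extendδ_ne B hy, extendδ_w] at hab; simp at hab
      · cases x; cases y; rfl
  δ_leaf := by
      have := B.finite
      intro z
      rcases z with x | x
      · by_cases hx : x = u
        · subst hx
          rw [extendδ_u, addPendant_ncard_inl_ne (by simp), addPendant_ncard_inr]
        · rw [extendδ_ne B hx, 
            addPendant_ncard_inl_ne (by simpa using fun hc => hx (B.δ_inj hc)),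
            addPendant_ncard_inl_ne (fun hc => hx (B.δ_inj hc)), B.δ_leaf]
      · cases x
        rw [extendδ_w, addPendant_ncard_inr]
  δ_surj := by
      have := B.finite
      intro z hz
      rcases z with z | z
      · rcases z with x | x
        · by_cases hx : x = B.δ u
          · subst hx
            rw [addPendant_ncard_inl_eq, addPendant_ncard_inl_eq, B.δ_leaf u] at hz
            omega
          · rw [addPendant_ncard_inl_ne (by simpa using hx), 
              addPendant_ncard_inl_ne hx] at hz
            obtain ⟨t, ht⟩ := B.δ_surj x hz
            have htu : t ≠ u := fun hc => hx (by rw [← ht, hc])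
            exact ⟨Sum.inl t, by rw [extendδ_ne B htu, ht]⟩
        · cases x
          exact ⟨Sum.inl u, extendδ_u B u⟩
      · cases z
        exact ⟨Sum.inr (), rfl⟩

/-- Base case: a branch decomposition for a two-element vertex type. -/
def baseDecomp (G : SimpleGraph V) (e : V ≃ Fin 2) : BranchDecomp G where
  L := Fin 2
  T := ⊤
  finite := by infer_instance
  connected := by
    constructor
    intro a b
    by_cases h : a = b
    · rw [h]
    · exact ((SimpleGraph.top_adj a b).2 h).reachable
  acyclic := by
    intro a c hc
    have h1 := hc.support_nodup
    have h2 : c.support.tail.length = c.length := by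
      have := c.length_support
      simp only [List.length_tail, this]
      omega
    have h3 := hc.three_le_length
    have h4 := h1.length_le_card
    simp only [h2, Fintype.card_fin] at h4
    omega
  subcubic := by
    intro x
    have hsub : (⊤ : SimpleGraph (Fin 2)).neighborSet x ⊆ Set.univ := Set.subset_univ _
    calc ((⊤ : SimpleGraph (Fin 2)).neighborSet x).ncard ≤ (Set.univ : Set (Fin 2)).ncard :=
        Set.ncard_le_ncard hsub (Set.toFinite _)
      _ ≤ 3 := by rw [Set.ncard_univ]; simp
  δ := e
  δ_inj := e.injective
  δ_leaf := by
    intro v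
    have hx : ∀ x : Fin 2, (⊤ : SimpleGraph (Fin 2)).neighborSet x = {x + 1} := by
      intro x
      ext y
      simp only [SimpleGraph.mem_neighborSet, SimpleGraph.top_adj, Set.mem_singleton_iff]
      revert x y; decide
    rw [hx]; simp
  δ_surj := fun x _ => ⟨e.symm x, by simp⟩

lemma exists_branchDecomp : ∀ (n : ℕ) (V : Type upat) [Finite V] (G : SimpleGraph V),
    Nat.card V = n + 2 → Nonempty (BranchDecomp G) := by
  intro n
  induction n with
  | zero =>
    intro V _ G hV
    have := Fintype.ofFinite V
    have hc : Fintype.card V = 2 := by rw [← Nat.card_eq_fintype_card]; omega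
    exact ⟨baseDecomp G (Fintype.equivFinOfCardEq hc)⟩
  | succ n ih =>
    intro V _ G hV
    have hpos : 0 < Nat.card V := by omega
    have hne : Nonempty V := (Nat.card_pos_iff.1 hpos).1
    obtain ⟨v₀⟩ := hne
    classical
    let V' := {x : V // x ≠ v₀}
    have hbij : Function.Bijective (Sum.elim Subtype.val (fun _ => v₀) : V' ⊕ Unit → V) := by
      constructor
      · intro a b hab
        rcases a with a | a <;> rcases b with b | b
        · simp only [Sum.elim_inl] at hab
          rw [Subtype.ext hab]
        · simp only [Sum.elim_inl, Sum.elim_inr] at hab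
          exact absurd hab a.2
        · simp only [Sum.elim_inl, Sum.elim_inr] at hab
          exact absurd hab.symm b.2
        · cases a; cases b; rfl
      · intro y
        by_cases h : y = v₀
        · exact ⟨Sum.inr (), h.symm⟩
        · exact ⟨Sum.inl ⟨y, h⟩, rfl⟩
    let eq : V' ⊕ Unit ≃ V := Equiv.ofBijective _ hbij
    have hcard' : Nat.card V' = n + 2 := by
      have h1 : Nat.card (V' ⊕ Unit) = Nat.card V := Nat.card_congr eq
      rw [Nat.card_sum] at h1
      simp only [Nat.card_unique] at h1
      omega
    obtain ⟨B₁⟩ := ih V' (⊥ : SimpleGraph V') hcard'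
    have hne' : Nonempty V' := by
      have : 0 < Nat.card V' := by omega
      exact (Nat.card_pos_iff.1 this).1
    obtain ⟨u₁⟩ := hne'
    exact ⟨(B₁.extend u₁ (⊥ : SimpleGraph (V' ⊕ Unit))).congr eq.symm G⟩

end Extend

section Width

variable {V : Type*} {G : SimpleGraph V}

lemma BranchDecomp.width_le {B : BranchDecomp G} {m : ℕ}
    (h : ∀ a b : B.L, B.T.Adj a b → cutmim G (B.side a b) (B.side a b)ᶜ ≤ m) :
    B.width ≤ m := by
  apply nat_sSup_le
  rintro n ⟨a, b, hab, rfl⟩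
  exact h a b hab

lemma BranchDecomp.cutmim_le_width [Finite V] (B : BranchDecomp G) {a b : B.L}
    (hab : B.T.Adj a b) : cutmim G (B.side a b) (B.side a b)ᶜ ≤ B.width := by
  apply le_csSup
  · refine ⟨Nat.card V, ?_⟩
    rintro n ⟨a, b, hab, rfl⟩
    exact cutmim_le_natcard
  · exact ⟨a, b, hab, rfl⟩

lemma mimw_le_width (B : BranchDecomp G) : mimw G ≤ B.width :=
  Nat.sInf_le ⟨B, rfl⟩

end Width

section Dir2

variable {V : Type*} [Finite V] {G : SimpleGraph V} {u v : V}
  {G' : SimpleGraph (V ⊕ Unit)}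

lemma extend_width_le
    (hG' : ∀ a b : V ⊕ Unit, G'.Adj a b ↔
      ((∃ x y : V, a = Sum.inl x ∧ b = Sum.inl y ∧ G.Adj x y ∧ s(x, y) ≠ s(u, v)) ∨
       (∃ x : V, (x = u ∨ x = v) ∧
        ((a = Sum.inl x ∧ b = Sum.inr ()) ∨ (a = Sum.inr () ∧ b = Sum.inl x)))))
    (B : BranchDecomp G) :
    (B.extend u G').width ≤ B.width + 1 := by
  classical
  set ℓ : B.L := B.δ u with hℓ
  set T₂ : SimpleGraph ((B.L ⊕ Unit) ⊕ Unit) :=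
    addPendant (addPendant B.T ℓ) (Sum.inl ℓ) with hT₂
  set f : B.L → (B.L ⊕ Unit) ⊕ Unit := fun x => Sum.inl (Sum.inl x) with hf
  have hfinj : Function.Injective f :=
    fun x y h => Sum.inl_injective (Sum.inl_injective h)
  set g : (B.L ⊕ Unit) ⊕ Unit → B.L :=
    fun z => match z with | Sum.inl (Sum.inl x) => x | _ => ℓ with hg
  -- adjacency destructor for T₂
  have hadjcases : ∀ {p q : (B.L ⊕ Unit) ⊕ Unit}, T₂.Adj p q →
      (∃ x y : B.L, p = f x ∧ q = f y ∧ B.T.Adj x y) ∨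
      (p = f ℓ ∧ q = Sum.inl (Sum.inr ())) ∨ (p = Sum.inl (Sum.inr ()) ∧ q = f ℓ) ∨
      (p = f ℓ ∧ q = Sum.inr ()) ∨ (p = Sum.inr () ∧ q = f ℓ) := by
    intro p q h
    rcases p with (x | x) | x <;> rcases q with (y | y) | y
    · exact Or.inl ⟨x, y, rfl, rfl, addPendant_adj_inl_inl.1 (addPendant_adj_inl_inl.1 h)⟩
    · cases y
      have hx : x = ℓ := addPendant_adj_inl_inr.1 (addPendant_adj_inl_inl.1 h)
      exact Or.inr (Or.inl ⟨by rw [hx], rfl⟩)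
    · cases y
      have hx : Sum.inl x = Sum.inl ℓ := addPendant_adj_inl_inr.1 h
      exact Or.inr (Or.inr (Or.inr (Or.inl ⟨by rw [Sum.inl_injective hx], rfl⟩)))
    · cases x
      have hy : y = ℓ := addPendant_adj_inr_inl.1 (addPendant_adj_inl_inl.1 h)
      exact Or.inr (Or.inr (Or.inl ⟨rfl, by rw [hy]⟩))
    · cases x; cases y
      exact absurd (addPendant_adj_inl_inl.1 h) (SimpleGraph.irrefl _)
    · cases x; cases y
      exact absurd (addPendant_adj_inl_inr.1 h) (by simp)
    · cases x
      have hy : Sum.inl y = Sum.inl ℓ := addPendant_adj_inr_inl.1 h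
      exact Or.inr (Or.inr (Or.inr (Or.inr ⟨rfl, by rw [Sum.inl_injective hy]⟩)))
    · cases x; cases y
      exact absurd (addPendant_adj_inr_inl.1 h) (by simp)
    · cases x; cases y
      exact absurd h (SimpleGraph.irrefl _)
  -- lifting reachability into T₂ minus an edge not of `f`-shape
  have lift2 : ∀ (ed : Sym2 ((B.L ⊕ Unit) ⊕ Unit)),
      (∀ x' y' : B.L, s(f x', f y') ≠ ed) → ∀ p q : B.L, B.T.Reachable p q →
      (T₂.deleteEdges {ed}).Reachable (f p) (f q) := by
    intro ed hed p q h
    refine reach_of_adjImp f ?_ h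
    intro x y hxy
    right
    rw [SimpleGraph.deleteEdges_adj]
    refine ⟨addPendant_adj_inl_inl.2 (addPendant_adj_inl_inl.2 hxy), ?_⟩
    intro hc
    exact hed x y (Set.mem_singleton_iff.1 hc)
  -- isolation of the two pendant-side vertices when their unique edge is deleted
  have hisoA : ∀ (ed : Sym2 ((B.L ⊕ Unit) ⊕ Unit)),
      s(Sum.inl (Sum.inr ()), f ℓ) = ed →
      ∀ w, ¬ (T₂.deleteEdges {ed}).Adj (Sum.inl (Sum.inr ())) w := by
    intro ed hed w hw
    rw [SimpleGraph.deleteEdges_adj] at hw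
    rcases hadjcases hw.1 with ⟨x, y, hp, hq, _⟩ | ⟨hp, hq⟩ | ⟨hp, hq⟩ | ⟨hp, hq⟩ | ⟨hp, hq⟩
    · exact absurd hp (by simp [hf])
    · exact absurd hp (by simp [hf])
    · subst hq; exact hw.2 (by rw [← hed]; rfl)
    · exact absurd hp (by simp [hf])
    · exact absurd hp (by simp)
  have hisoB : ∀ (ed : Sym2 ((B.L ⊕ Unit) ⊕ Unit)),
      s(Sum.inr (), f ℓ) = ed →
      ∀ w, ¬ (T₂.deleteEdges {ed}).Adj (Sum.inr ()) w := by
    intro ed hed w hw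
    rw [SimpleGraph.deleteEdges_adj] at hw
    rcases hadjcases hw.1 with ⟨x, y, hp, hq, _⟩ | ⟨hp, hq⟩ | ⟨hp, hq⟩ | ⟨hp, hq⟩ | ⟨hp, hq⟩
    · exact absurd hp (by simp [hf])
    · exact absurd hp (by simp [hf])
    · exact absurd hp (by simp)
    · exact absurd hp (by simp [hf])
    · subst hq; exact hw.2 (by rw [← hed]; rfl)
  apply BranchDecomp.width_le
  intro a b hab
  have hab' : T₂.Adj a b := hab
  rcases hadjcases hab' with ⟨a₀, b₀, ha, hb, hT⟩ | ⟨ha, hb⟩ | ⟨ha, hb⟩ | ⟨ha, hb⟩ | ⟨ha, hb⟩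
  · -- main case : an original tree edge
    subst ha hb
    set X : Set V := B.side a₀ b₀ with hX
    have core1 : ∀ p q : B.L, (B.T.deleteEdges {s(a₀, b₀)}).Reachable p q →
        (T₂.deleteEdges {s(f a₀, f b₀)}).Reachable (f p) (f q) := by
      intro p q h
      refine reach_of_adjImp f ?_ h
      intro x y hxy
      rw [SimpleGraph.deleteEdges_adj] at hxy
      right
      rw [SimpleGraph.deleteEdges_adj]
      refine ⟨addPendant_adj_inl_inl.2 (addPendant_adj_inl_inl.2 hxy.1), ?_⟩
      intro hc
      apply hxy.2
      rw [Set.mem_singleton_iff] at hc ⊢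
      have hc' : Sym2.map f s(x, y) = Sym2.map f s(a₀, b₀) := by
        rw [Sym2.map_pair_eq, Sym2.map_pair_eq]; exact hc
      exact Sym2.map.injective hfinj hc'
    have core2 : ∀ p q : (B.L ⊕ Unit) ⊕ Unit,
        (T₂.deleteEdges {s(f a₀, f b₀)}).Reachable p q →
        (B.T.deleteEdges {s(a₀, b₀)}).Reachable (g p) (g q) := by
      intro p q h
      refine reach_of_adjImp g ?_ h
      intro x y hxy
      rw [SimpleGraph.deleteEdges_adj] at hxy
      rcases hadjcases hxy.1 with ⟨x', y', rfl, rfl, hT'⟩ | ⟨rfl, rfl⟩ | ⟨rfl, rfl⟩ | ⟨rfl, rfl⟩ | ⟨rfl, rfl⟩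
      · right
        rw [SimpleGraph.deleteEdges_adj]
        refine ⟨hT', ?_⟩
        intro hc
        apply hxy.2
        rw [Set.mem_singleton_iff] at hc ⊢
        rw [show s(f x', f y') = Sym2.map f s(x', y') from (Sym2.map_pair_eq _ _ _).symm,
          show s(f a₀, f b₀) = Sym2.map f s(a₀, b₀) from (Sym2.map_pair_eq _ _ _).symm, hc]
      · exact Or.inl rfl
      · exact Or.inl rfl
      · exact Or.inl rfl
      · exact Or.inl rfl
    -- the cherry edges are still present
    have hedge1 : (T₂.deleteEdges {s(f a₀, f b₀)}).Adj (Sum.inl (Sum.inr ())) (f ℓ) := by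
      rw [SimpleGraph.deleteEdges_adj]
      refine ⟨addPendant_adj_inl_inl.2 (addPendant_adj_inr_inl.2 rfl), ?_⟩
      intro hc
      rw [Set.mem_singleton_iff, Sym2.eq_iff] at hc
      rcases hc with ⟨h1, _⟩ | ⟨h1, _⟩ <;> exact absurd h1 (by simp [hf])
    have hedge2 : (T₂.deleteEdges {s(f a₀, f b₀)}).Adj (Sum.inr ()) (f ℓ) := by
      rw [SimpleGraph.deleteEdges_adj]
      refine ⟨addPendant_adj_inr_inl.2 rfl, ?_⟩
      intro hc
      rw [Set.mem_singleton_iff, Sym2.eq_iff] at hc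
      rcases hc with ⟨h1, _⟩ | ⟨h1, _⟩ <;> exact absurd h1 (by simp [hf])
    have hucase : (T₂.deleteEdges {s(f a₀, f b₀)}).Reachable (Sum.inl (Sum.inr ())) (f a₀) ↔
        (B.T.deleteEdges {s(a₀, b₀)}).Reachable ℓ a₀ := by
      constructor
      · intro h; exact core2 _ _ h
      · intro h; exact (hedge1.reachable).trans (core1 _ _ h)
    have hwcase : (T₂.deleteEdges {s(f a₀, f b₀)}).Reachable (Sum.inr ()) (f a₀) ↔
        (B.T.deleteEdges {s(a₀, b₀)}).Reachable ℓ a₀ := by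
      constructor
      · intro h; exact core2 _ _ h
      · intro h; exact (hedge2.reachable).trans (core1 _ _ h)
    have h1 : ∀ x : V, Sum.inl x ∈ (B.extend u G').side (f a₀) (f b₀) ↔ x ∈ X := by
      intro x
      by_cases hx : x = u
      · rw [hx]
        show (T₂.deleteEdges _).Reachable (extendδ B u (Sum.inl u)) (f a₀) ↔ _
        rw [extendδ_u]
        exact hucase
      · show (T₂.deleteEdges _).Reachable (extendδ B u (Sum.inl x)) (f a₀) ↔ _
        rw [extendδ_ne B hx]
        constructor
        · intro h; exact core2 _ _ h
        · intro h; exact core1 _ _ h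
    have h2 : Sum.inr () ∈ (B.extend u G').side (f a₀) (f b₀) ↔ u ∈ X := by
      show (T₂.deleteEdges _).Reachable (extendδ B u (Sum.inr ())) (f a₀) ↔ _
      rw [extendδ_w]
      exact hwcase
    calc cutmim G' ((B.extend u G').side (f a₀) (f b₀)) ((B.extend u G').side (f a₀) (f b₀))ᶜ
        ≤ cutmim G X Xᶜ + 1 := cutmim_subdiv_le hG' _ X h1 h2
      _ ≤ B.width + 1 := by
          have h3 := B.cutmim_le_width hT
          rw [← hX] at h3
          omega
  · -- edge between f ℓ and the u-leaf
    subst ha hb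
    have hcompl : ((B.extend u G').side (f ℓ) (Sum.inl (Sum.inr ())))ᶜ = {Sum.inl u} := by
      ext z
      simp only [Set.mem_compl_iff, Set.mem_singleton_iff]
      constructor
      · intro h
        by_contra hne
        apply h
        rcases z with x | x
        · have hx : x ≠ u := fun hc => hne (by rw [hc])
          show (T₂.deleteEdges ({s(f ℓ, Sum.inl (Sum.inr ()))} : Set (Sym2 ((B.L ⊕ Unit) ⊕ Unit)))).Reachable (extendδ B u (Sum.inl x)) (f ℓ)
          rw [extendδ_ne B hx]
          refine lift2 _ ?_ _ _ (B.connected.preconnected (B.δ x) ℓ)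
          intro x' y' hc
          rw [Sym2.eq_iff] at hc
          rcases hc with ⟨_, h2'⟩ | ⟨h1', _⟩ <;> simp [hf] at *
        · cases x
          show (T₂.deleteEdges ({s(f ℓ, Sum.inl (Sum.inr ()))} : Set (Sym2 ((B.L ⊕ Unit) ⊕ Unit)))).Reachable (extendδ B u (Sum.inr ())) (f ℓ)
          rw [extendδ_w]
          refine SimpleGraph.Adj.reachable ?_
          rw [SimpleGraph.deleteEdges_adj]
          refine ⟨addPendant_adj_inr_inl.2 rfl, ?_⟩
          intro hc
          rw [Set.mem_singleton_iff, Sym2.eq_iff] at hc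
          rcases hc with ⟨h1', _⟩ | ⟨h1', _⟩ <;> simp [hf] at h1'
      · rintro rfl h
        have h' : (T₂.deleteEdges {s(f ℓ, Sum.inl (Sum.inr ()))}).Reachable
            (Sum.inl (Sum.inr ())) (f ℓ) := by
          have h'' : (T₂.deleteEdges {s(f ℓ, Sum.inl (Sum.inr ()))}).Reachable
            (extendδ B u (Sum.inl u)) (f ℓ) := h
          rwa [extendδ_u] at h''
        have := isolated_eq_of_reachable
          (hisoA _ (by rw [Sym2.eq_swap])) h'
        simp [hf] at this
    refine le_trans (le_trans (cutmim_le_one_right ?_) ?_) le_rfl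
    · rw [hcompl]; exact Set.subsingleton_singleton
    · omega
  · -- edge between the u-leaf and f ℓ
    subst ha hb
    have hsub : ((B.extend u G').side (Sum.inl (Sum.inr ())) (f ℓ)).Subsingleton := by
      intro z1 h1' z2 h2'
      have key : ∀ z, z ∈ (B.extend u G').side (Sum.inl (Sum.inr ())) (f ℓ) → z = Sum.inl u := by
        intro z hz
        have hz' : (T₂.deleteEdges {s(Sum.inl (Sum.inr ()), f ℓ)}).Reachable
            (Sum.inl (Sum.inr ())) (extendδ B u z) := (hz : _root_.SimpleGraph.Reachable _ _ _).symm
        have heq := isolated_eq_of_reachable (hisoA _ rfl) hz'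
        rcases z with x | x
        · by_cases hx : x = u
          · rw [hx]
          · rw [extendδ_ne B hx] at heq; simp [hf] at heq
        · cases x
          rw [extendδ_w] at heq; simp at heq
      rw [key z1 h1', key z2 h2']
    exact le_trans (cutmim_le_one_left hsub) (by omega)
  · -- edge between f ℓ and the w-leaf
    subst ha hb
    have hcompl : ((B.extend u G').side (f ℓ) (Sum.inr ()))ᶜ = {Sum.inr ()} := by
      ext z
      simp only [Set.mem_compl_iff, Set.mem_singleton_iff]
      constructor
      · intro h
        by_contra hne
        apply h
        rcases z with x | x
        · by_cases hx : x = u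
          · rw [hx]
            show (T₂.deleteEdges ({s(f ℓ, Sum.inr ())} : Set (Sym2 ((B.L ⊕ Unit) ⊕ Unit)))).Reachable (extendδ B u (Sum.inl u)) (f ℓ)
            rw [extendδ_u]
            refine SimpleGraph.Adj.reachable ?_
            rw [SimpleGraph.deleteEdges_adj]
            refine ⟨addPendant_adj_inl_inl.2 (addPendant_adj_inr_inl.2 rfl), ?_⟩
            intro hc
            rw [Set.mem_singleton_iff, Sym2.eq_iff] at hc
            rcases hc with ⟨h1', _⟩ | ⟨h1', _⟩ <;> simp [hf] at h1'
          · show (T₂.deleteEdges ({s(f ℓ, Sum.inr ())} : Set (Sym2 ((B.L ⊕ Unit) ⊕ Unit)))).Reachable (extendδ B u (Sum.inl x)) (f ℓ)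
            rw [extendδ_ne B hx]
            refine lift2 _ ?_ _ _ (B.connected.preconnected (B.δ x) ℓ)
            intro x' y' hc
            rw [Sym2.eq_iff] at hc
            rcases hc with ⟨_, h2'⟩ | ⟨h1', _⟩ <;> simp [hf] at *
        · cases x
          exact absurd rfl hne
      · rintro rfl h
        have h' : (T₂.deleteEdges {s(f ℓ, Sum.inr ())}).Reachable (Sum.inr ()) (f ℓ) := h
        have := isolated_eq_of_reachable (hisoB _ (by rw [Sym2.eq_swap])) h'
        simp [hf] at this
    refine le_trans (cutmim_le_one_right ?_) ?_
    · rw [hcompl]; exact Set.subsingleton_singleton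
    · omega
  · -- edge between the w-leaf and f ℓ
    subst ha hb
    have hsub : ((B.extend u G').side (Sum.inr ()) (f ℓ)).Subsingleton := by
      intro z1 h1' z2 h2'
      have key : ∀ z, z ∈ (B.extend u G').side (Sum.inr ()) (f ℓ) → z = Sum.inr () := by
        intro z hz
        have hz' : (T₂.deleteEdges {s(Sum.inr (), f ℓ)}).Reachable
            (Sum.inr ()) (extendδ B u z) := (hz : _root_.SimpleGraph.Reachable _ _ _).symm
        have heq := isolated_eq_of_reachable (hisoB _ rfl) hz'
        rcases z with x | x
        · by_cases hx : x = u
          · rw [hx, extendδ_u] at heq; simp at heq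
          · rw [extendδ_ne B hx] at heq; simp [hf] at heq
        · cases x; rfl
      rw [key z1 h1', key z2 h2']
    exact le_trans (cutmim_le_one_left hsub) (by omega)

end Dir2

section Prune

variable {V : Type*} [Finite V] {G' : SimpleGraph (V ⊕ Unit)}

/-- A walk in a graph whose support lies in `S` yields reachability in the induced graph. -/
lemma reach_induce {α : Type*} {H : SimpleGraph α} {S : Set α} {x y : α} (w : H.Walk x y)
    (hx : x ∈ S) (hy : y ∈ S) (hsupp : ∀ z ∈ w.support, z ∈ S) :
    (H.induce S).Reachable ⟨x, hx⟩ ⟨y, hy⟩ := by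
  have h := reach_induce_del (E := (∅ : Set (Sym2 α))) w hx hy hsupp (by simp)
  refine reach_of_adjImp id ?_ h
  intro p q hpq
  rw [SimpleGraph.deleteEdges_adj] at hpq
  exact Or.inr hpq.1

/-- In an acyclic graph, the support of a path is contained in the supports of
any pair of walks through an intermediate vertex. -/
lemma path_support_sub {α : Type*} {H : SimpleGraph α} (hH : H.IsAcyclic)
    {s t z : α} (P : H.Walk s t) (hP : P.IsPath) (W₁ : H.Walk s z) (W₂ : H.Walk z t) :
    ∀ y ∈ P.support, y ∈ W₁.support ∨ y ∈ W₂.support := by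
  classical
  intro y hy
  have hQ : (W₁.append W₂).bypass.IsPath := SimpleGraph.Walk.bypass_isPath _
  have hPQ : P = (W₁.append W₂).bypass := by
    have := hH.path_unique ⟨P, hP⟩ ⟨(W₁.append W₂).bypass, hQ⟩
    exact congrArg Subtype.val this
  rw [hPQ] at hy
  have h1 := SimpleGraph.Walk.support_bypass_subset _ hy
  rw [SimpleGraph.Walk.support_append] at h1
  rcases List.mem_append.1 h1 with h | h
  · exact Or.inl h
  · exact Or.inr (List.tail_subset _ h)

/-- A walk ending at `y`, if nonnil, provides a neighbour of `y` on the walk. -/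
lemma exists_neighbor_end {α : Type*} {H : SimpleGraph α} :
    ∀ {a y : α} (w : H.Walk a y), ¬ w.Nil →
      ∃ z ∈ w.support, H.Adj z y ∧ s(z, y) ∈ w.edges := by
  intro a y w
  induction w with
  | nil => intro h; exact absurd SimpleGraph.Walk.nil_nil h
  | @cons p q r hadj w ih =>
    intro _
    by_cases hw : w.Nil
    · cases w with
      | nil => exact ⟨p, by simp, hadj, by simp⟩
      | cons h' q' => simp at hw
    · obtain ⟨z, hz, hadj', he⟩ := ih hw
      exact ⟨z, by simp [hz], hadj', by simp [he]⟩

/-- The Steiner part of the tree of a branch decomposition of `G'`: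
all vertices lying on paths between leaves of "real" vertices. -/
def pruneSet (B' : BranchDecomp G') : Set B'.L :=
  {x | ∃ (v₁ v₂ : V) (p : B'.T.Walk (B'.δ (Sum.inl v₁)) (B'.δ (Sum.inl v₂))),
    p.IsPath ∧ x ∈ p.support}

lemma leaf_mem_pruneSet (B' : BranchDecomp G') (x : V) :
    B'.δ (Sum.inl x) ∈ pruneSet B' :=
  ⟨x, x, SimpleGraph.Walk.nil, SimpleGraph.Walk.IsPath.nil, by simp⟩

/-- `pruneSet` is closed under paths. -/
lemma pruneSet_path_closed (B' : BranchDecomp G') {s t : B'.L}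
    (hs : s ∈ pruneSet B') (ht : t ∈ pruneSet B') (P : B'.T.Walk s t) (hP : P.IsPath) :
    ∀ y ∈ P.support, y ∈ pruneSet B' := by
  classical
  obtain ⟨a₁, a₂, Q₁, hQ₁, hsQ₁⟩ := hs
  obtain ⟨b₁, b₂, Q₂, hQ₂, htQ₂⟩ := ht
  obtain ⟨R₀⟩ := B'.connected.preconnected (B'.δ (Sum.inl a₁)) (B'.δ (Sum.inl b₁))
  set R : B'.T.Walk (B'.δ (Sum.inl a₁)) (B'.δ (Sum.inl b₁)) := R₀.bypass with hR
  have hRpath : R.IsPath := SimpleGraph.Walk.bypass_isPath _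
  have hRsub : ∀ y ∈ R.support, y ∈ pruneSet B' := fun y hy => ⟨a₁, b₁, R, hRpath, hy⟩
  set W₁ : B'.T.Walk s (B'.δ (Sum.inl b₁)) := (Q₁.takeUntil s hsQ₁).reverse.append R with hW₁
  set W₂ : B'.T.Walk (B'.δ (Sum.inl b₁)) t := Q₂.takeUntil t htQ₂ with hW₂
  intro y hy
  rcases path_support_sub B'.acyclic P hP W₁ W₂ y hy with h | h
  · rw [hW₁, SimpleGraph.Walk.support_append] at h
    rcases List.mem_append.1 h with h' | h'
    · rw [SimpleGraph.Walk.support_reverse] at h'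
      have := SimpleGraph.Walk.support_takeUntil_subset Q₁ hsQ₁ (List.mem_reverse.1 h')
      exact ⟨a₁, a₂, Q₁, hQ₁, this⟩
    · exact hRsub y (List.tail_subset _ h')
  · have := SimpleGraph.Walk.support_takeUntil_subset Q₂ htQ₂ h
    exact ⟨b₁, b₂, Q₂, hQ₂, this⟩

/-- An element of `pruneSet` that is not a real leaf has two distinct neighbours
inside `pruneSet`. -/
lemma pruneSet_internal (B' : BranchDecomp G') {x : B'.L} (hx : x ∈ pruneSet B')
    (hleaf : ∀ t : V, x ≠ B'.δ (Sum.inl t)) :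
    ∃ z₁ ∈ pruneSet B', ∃ z₂ ∈ pruneSet B',
      z₁ ≠ z₂ ∧ B'.T.Adj z₁ x ∧ B'.T.Adj z₂ x := by
  classical
  obtain ⟨v₁, v₂, Q, hQ, hxQ⟩ := hx
  have hv12 : v₁ ≠ v₂ := by
    rintro rfl
    cases hQnil : Q with
    | nil =>
      rw [hQnil] at hxQ
      simp only [SimpleGraph.Walk.support_nil, List.mem_singleton] at hxQ
      exact hleaf v₁ hxQ
    | cons h' q' =>
      rw [hQnil] at hQ
      have hnodup := (SimpleGraph.Walk.isPath_def _).1 hQ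
      simp only [SimpleGraph.Walk.support_cons, List.nodup_cons] at hnodup
      exact hnodup.1 q'.end_mem_support
  set Q₁ := Q.takeUntil x hxQ with hQ₁def
  set Q₂ := Q.dropUntil x hxQ with hQ₂def
  have hQ₁ : Q₁.IsPath := hQ.takeUntil hxQ
  have hQ₂ : Q₂.IsPath := hQ.dropUntil hxQ
  have hQ₁nil : ¬ Q₁.Nil := by
    intro h
    have := SimpleGraph.Walk.eq_of_length_eq_zero
      ((SimpleGraph.Walk.nil_iff_length_eq).1 h)
    exact hleaf v₁ this.symm
  have hQ₂nil : ¬ Q₂.reverse.Nil := by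
    intro h
    have := SimpleGraph.Walk.eq_of_length_eq_zero
      ((SimpleGraph.Walk.nil_iff_length_eq).1 h)
    exact hleaf v₂ this.symm
  obtain ⟨z₁, hz₁sup, hz₁adj, hz₁e⟩ := exists_neighbor_end Q₁ hQ₁nil
  obtain ⟨z₂, hz₂sup, hz₂adj, hz₂e⟩ := exists_neighbor_end Q₂.reverse hQ₂nil
  rw [SimpleGraph.Walk.support_reverse, List.mem_reverse] at hz₂sup
  have hz₂e' : s(z₂, x) ∈ Q₂.edges := by
    have := SimpleGraph.Walk.edges_reverse Q₂
    rw [this, List.mem_reverse] at hz₂e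
    exact hz₂e
  refine ⟨z₁, ?_, z₂, ?_, ?_, hz₁adj, hz₂adj⟩
  · exact pruneSet_path_closed B' (leaf_mem_pruneSet B' v₁) (leaf_mem_pruneSet B' v₂) Q hQ z₁
      (SimpleGraph.Walk.support_takeUntil_subset Q hxQ hz₁sup)
  · exact pruneSet_path_closed B' (leaf_mem_pruneSet B' v₁) (leaf_mem_pruneSet B' v₂) Q hQ z₂
      (SimpleGraph.Walk.support_dropUntil_subset Q hxQ hz₂sup)
  · intro hz
    subst hz
    have hsplit : Q₁.append Q₂ = Q := Q.take_spec hxQ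
    have hnodup : (Q₁.append Q₂).edges.Nodup := by
      rw [hsplit]; exact hQ.isTrail.edges_nodup
    rw [SimpleGraph.Walk.edges_append] at hnodup
    exact (List.disjoint_of_nodup_append hnodup) hz₁e hz₂e'

/-- Prune a branch decomposition of the subdivided graph to one of `G`. -/
noncomputable def BranchDecomp.prune [Nontrivial V] (B' : BranchDecomp G')
    (G : SimpleGraph V) : BranchDecomp G where
  L := {x : B'.L // x ∈ pruneSet B'}
  T := B'.T.induce (pruneSet B')
  finite := by have := B'.finite; exact inferInstance
  connected := by
    have hne : Nonempty V := inferInstance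
    obtain ⟨v₀⟩ := hne
    have hreach : ∀ z : {x : B'.L // x ∈ pruneSet B'},
        (B'.T.induce (pruneSet B')).Reachable z ⟨B'.δ (Sum.inl v₀), leaf_mem_pruneSet B' v₀⟩ := by
      rintro ⟨x, hx⟩
      classical
      obtain ⟨a₁, a₂, Q, hQ, hxQ⟩ := hx
      have h1 : (B'.T.induce (pruneSet B')).Reachable ⟨x, ⟨a₁, a₂, Q, hQ, hxQ⟩⟩
          ⟨B'.δ (Sum.inl a₁), leaf_mem_pruneSet B' a₁⟩ := by
        have hW := reach_induce (H := B'.T) (S := pruneSet B') (Q.takeUntil x hxQ)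
          (leaf_mem_pruneSet B' a₁) ⟨a₁, a₂, Q, hQ, hxQ⟩
          (fun z hz => ⟨a₁, a₂, Q, hQ, SimpleGraph.Walk.support_takeUntil_subset Q hxQ hz⟩)
        exact hW.symm
      obtain ⟨R₀⟩ := B'.connected.preconnected (B'.δ (Sum.inl a₁)) (B'.δ (Sum.inl v₀))
      have hR : ∀ z ∈ R₀.bypass.support, z ∈ pruneSet B' := fun z hz =>
        ⟨a₁, v₀, R₀.bypass, SimpleGraph.Walk.bypass_isPath _, hz⟩
      have h2 := reach_induce (H := B'.T) (S := pruneSet B') R₀.bypass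
        (leaf_mem_pruneSet B' a₁) (leaf_mem_pruneSet B' v₀) hR
      exact h1.trans h2
    have hne' : Nonempty {x : B'.L // x ∈ pruneSet B'} :=
      ⟨⟨B'.δ (Sum.inl v₀), leaf_mem_pruneSet B' v₀⟩⟩
    constructor
    intro z₁ z₂
    exact (hreach z₁).trans (hreach z₂).symm
  acyclic := by
    intro z c hc
    have hmap := hc.map
      (f := (⟨Subtype.val, fun h => h⟩ : B'.T.induce (pruneSet B') →g B'.T)) Subtype.val_injective
    exact B'.acyclic _ hmap
  subcubic := by
    intro z
    have := B'.finite
    calc ((B'.T.induce (pruneSet B')).neighborSet z).ncard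
        ≤ (B'.T.neighborSet z.val).ncard := by
          refine Set.ncard_le_ncard_of_injOn Subtype.val ?_ ?_ (Set.toFinite _)
          · intro w hw; exact hw
          · intro w _ w' _ hww; exact Subtype.ext hww
      _ ≤ 3 := B'.subcubic z.val
  δ := fun x => ⟨B'.δ (Sum.inl x), leaf_mem_pruneSet B' x⟩
  δ_inj := by
    intro x y hxy
    have := Subtype.ext_iff.1 hxy
    exact Sum.inl_injective (B'.δ_inj this)
  δ_leaf := by
    intro t
    show ((B'.T.induce (pruneSet B')).neighborSet
      ⟨B'.δ (Sum.inl t), leaf_mem_pruneSet B' t⟩).ncard = 1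
    have := B'.finite
    have hle : ((B'.T.induce (pruneSet B')).neighborSet
        ⟨B'.δ (Sum.inl t), leaf_mem_pruneSet B' t⟩).ncard ≤ 1 := by
      calc ((B'.T.induce (pruneSet B')).neighborSet _).ncard
          ≤ (B'.T.neighborSet (B'.δ (Sum.inl t))).ncard := by
            refine Set.ncard_le_ncard_of_injOn Subtype.val ?_ ?_ (Set.toFinite _)
            · intro w hw; exact hw
            · intro w _ w' _ hww; exact Subtype.ext hww
        _ = 1 := B'.δ_leaf (Sum.inl t)
    have hge : 0 < ((B'.T.induce (pruneSet B')).neighborSet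
        ⟨B'.δ (Sum.inl t), leaf_mem_pruneSet B' t⟩).ncard := by
      rw [Set.ncard_pos (Set.toFinite _)]
      obtain ⟨t', ht'⟩ := exists_ne t
      have hne : B'.δ (Sum.inl t') ≠ B'.δ (Sum.inl t) := by
        intro hc
        exact ht' (Sum.inl_injective (B'.δ_inj hc))
      obtain ⟨W₀⟩ := B'.connected.preconnected (B'.δ (Sum.inl t')) (B'.δ (Sum.inl t))
      classical
      have hWnil : ¬ W₀.bypass.Nil := by
        intro h
        exact hne (SimpleGraph.Walk.eq_of_length_eq_zero
          ((SimpleGraph.Walk.nil_iff_length_eq).1 h))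
      obtain ⟨z, hzsup, hzadj, _⟩ := exists_neighbor_end W₀.bypass hWnil
      have hzS : z ∈ pruneSet B' :=
        ⟨t', t, W₀.bypass, SimpleGraph.Walk.bypass_isPath _, hzsup⟩
      exact ⟨⟨z, hzS⟩, hzadj.symm⟩
    omega
  δ_surj := by
    intro z hz
    by_contra hnone
    push_neg at hnone
    have hleaf : ∀ t : V, z.val ≠ B'.δ (Sum.inl t) := by
      intro t hc
      exact hnone t (Subtype.ext hc.symm)
    obtain ⟨z₁, hz₁S, z₂, hz₂S, hne, hadj₁, hadj₂⟩ := pruneSet_internal B' z.2 hleaf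
    have := B'.finite
    have h2 : 1 < ((B'.T.induce (pruneSet B')).neighborSet z).ncard := by
      rw [Set.one_lt_ncard (Set.toFinite _)]
      refine ⟨⟨z₁, hz₁S⟩, hadj₁.symm, ⟨z₂, hz₂S⟩, hadj₂.symm, ?_⟩
      intro hc
      exact hne (Subtype.ext_iff.1 hc)
    omega

end Prune

section Dir1

variable {V : Type*} [Finite V] {G : SimpleGraph V} {u v : V}
  {G' : SimpleGraph (V ⊕ Unit)}

lemma prune_width_le [Nontrivial V]
    (hG' : ∀ a b : V ⊕ Unit, G'.Adj a b ↔
      ((∃ x y : V, a = Sum.inl x ∧ b = Sum.inl y ∧ G.Adj x y ∧ s(x, y) ≠ s(u, v)) ∨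
       (∃ x : V, (x = u ∨ x = v) ∧
        ((a = Sum.inl x ∧ b = Sum.inr ()) ∨ (a = Sum.inr () ∧ b = Sum.inl x)))))
    (huv : G.Adj u v) (B' : BranchDecomp G') :
    (B'.prune G).width ≤ B'.width := by
  classical
  apply BranchDecomp.width_le
  intro a b hab
  have hab' : B'.T.Adj a.val b.val := hab
  have hside : (B'.prune G).side a b = {x : V | Sum.inl x ∈ B'.side a.val b.val} := by
    ext x
    show ((B'.T.induce (pruneSet B')).deleteEdges ({s((⟨a.1, a.2⟩ : {x : B'.L // x ∈ pruneSet B'}), ⟨b.1, b.2⟩)} : Set (Sym2 {x : B'.L // x ∈ pruneSet B'}))).Reachable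
        ⟨B'.δ (Sum.inl x), leaf_mem_pruneSet B' x⟩ a ↔
      (B'.T.deleteEdges {s(a.val, b.val)}).Reachable (B'.δ (Sum.inl x)) a.val
    constructor
    · intro h
      refine reach_of_adjImp Subtype.val ?_ h
      intro p q hpq
      rw [SimpleGraph.deleteEdges_adj] at hpq
      right
      rw [SimpleGraph.deleteEdges_adj]
      refine ⟨hpq.1, ?_⟩
      intro hc
      apply hpq.2
      rw [Set.mem_singleton_iff] at hc ⊢
      have hc' : Sym2.map (Subtype.val : {x : B'.L // x ∈ pruneSet B'} → B'.L) s(p, q)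
          = Sym2.map Subtype.val s((⟨a.1, a.2⟩ : {x : B'.L // x ∈ pruneSet B'}), ⟨b.1, b.2⟩) := by
        rw [Sym2.map_pair_eq, Sym2.map_pair_eq]; exact hc
      exact Sym2.map.injective Subtype.val_injective hc'
    · intro h
      obtain ⟨W₀⟩ := h
      set P := W₀.bypass with hP
      have hPpath : P.IsPath := SimpleGraph.Walk.bypass_isPath _
      have hedges : ∀ e ∈ P.edges, e ∈ B'.T.edgeSet := by
        intro e he
        have h1 := P.edges_subset_edgeSet he
        rw [SimpleGraph.edgeSet_deleteEdges] at h1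
        exact h1.1
      set P' := P.transfer B'.T hedges with hP'
      have hP'path : P'.IsPath := hPpath.transfer hedges
      have hsupp : ∀ z ∈ P'.support, z ∈ pruneSet B' := by
        refine pruneSet_path_closed B' (leaf_mem_pruneSet B' x) a.2 P' hP'path
      have hedge2 : ∀ e ∈ P'.edges, e ∉ ({s(a.val, b.val)} : Set (Sym2 B'.L)) := by
        intro e he hc
        rw [SimpleGraph.Walk.edges_transfer] at he
        have h1 := P.edges_subset_edgeSet he
        rw [SimpleGraph.edgeSet_deleteEdges] at h1
        exact h1.2 hc
      have hmain := reach_induce_del (E := ({s(a.val, b.val)} : Set (Sym2 B'.L))) P'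
        (leaf_mem_pruneSet B' x) a.2 hsupp hedge2
      refine reach_of_adjImp id ?_ hmain
      intro p q hpq
      simp only [id_eq]
      rw [SimpleGraph.deleteEdges_adj] at hpq
      right
      rw [SimpleGraph.deleteEdges_adj]
      refine ⟨hpq.1, ?_⟩
      intro hc
      apply hpq.2
      rw [Set.mem_singleton_iff] at hc
      show Sym2.map Subtype.val _ ∈ ({s(a.val, b.val)} : Set (Sym2 B'.L))
      rw [hc, Set.mem_singleton_iff, Sym2.map_pair_eq]
  rw [hside]
  calc cutmim G {x : V | Sum.inl x ∈ B'.side a.val b.val}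
        {x : V | Sum.inl x ∈ B'.side a.val b.val}ᶜ
      ≤ cutmim G' (B'.side a.val b.val) (B'.side a.val b.val)ᶜ :=
        cutmim_le_cutmim_subdiv hG' huv _
    _ ≤ B'.width := B'.cutmim_le_width hab'

end Dir1

/-- Let `G'` be obtained from `G` by subdividing the edge `uv` once
(delete `uv`, add a new vertex `w = Sum.inr ()` adjacent exactly to `u` and `v`).
Then `mimw(G) ≤ mimw(G') ≤ mimw(G) + 1`. -/
theorem subdivision_mimw {V : Type*} [Finite V] (G : SimpleGraph V) (u v : V)
    (huv : G.Adj u v) (G' : SimpleGraph (V ⊕ Unit))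
    (hG' : ∀ a b : V ⊕ Unit, G'.Adj a b ↔
      ((∃ x y : V, a = Sum.inl x ∧ b = Sum.inl y ∧ G.Adj x y ∧ s(x, y) ≠ s(u, v)) ∨
       (∃ x : V, (x = u ∨ x = v) ∧
        ((a = Sum.inl x ∧ b = Sum.inr ()) ∨ (a = Sum.inr () ∧ b = Sum.inl x))))) :
    mimw G ≤ mimw G' ∧ mimw G' ≤ mimw G + 1 := by
  classical
  haveI hnt : Nontrivial V := ⟨u, v, huv.ne⟩
  have hcard : 1 < Nat.card V := Finite.one_lt_card_iff_nontrivial.2 hnt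
  obtain ⟨B₀⟩ := exists_branchDecomp (Nat.card V - 2) V G (by omega)
  have hsetG_ne : {n : ℕ | ∃ B : BranchDecomp G, B.width = n}.Nonempty := ⟨B₀.width, B₀, rfl⟩
  have hsetG'_ne : {n : ℕ | ∃ B : BranchDecomp G', B.width = n}.Nonempty :=
    ⟨(B₀.extend u G').width, B₀.extend u G', rfl⟩
  constructor
  · obtain ⟨B', hB'⟩ := Nat.sInf_mem hsetG'_ne
    calc mimw G ≤ (B'.prune G).width := mimw_le_width _
      _ ≤ B'.width := prune_width_le hG' huv B'
      _ = mimw G' := hB'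
  · obtain ⟨B, hB⟩ := Nat.sInf_mem hsetG_ne
    calc mimw G' ≤ (B.extend u G').width := mimw_le_width _
      _ ≤ B.width + 1 := extend_width_le hG' B
      _ = mimw G + 1 := by rw [hB]; rfl
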